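/- arXiv:0806.1600 — 8 statements merged into one kernel-verified Lean document; each statement's English description precedes it below -/
import Mathlib

section
/- Let φ : [0,∞) → [0,∞) be differentiable and let g : [0,∞) → [0,∞) be locally Lipschitz continuous. Suppose Λ := ∫₀^∞ φ(t) dt < ∞, that there are constants α, β > 0 with g(y) ≤ α·y² for all y ∈ [0,β], and that φ'(t) ≤ g(φ(t)) for all t ≥ 0. Then for every t ≥ (Λ/β)·exp(α·Λ) one has φ(t) ≤ (exp(α·Λ) − 1)/(α·t). -/
open MeasureTheory Set

namespace Stmt0Aux

open Filter

lemma aux0 (φ φ' g : ℝ → ℝ) (α β Λ : ℝ)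
    (hφ_nonneg : ∀ t ≥ (0:ℝ), 0 ≤ φ t)
    (hφ_deriv : ∀ t ≥ (0:ℝ), HasDerivWithinAt φ (φ' t) (Ici 0) t)
    (hint : IntegrableOn φ (Ioi 0) volume)
    (hΛ : Λ = ∫ t in Ioi (0:ℝ), φ t)
    (hα : 0 < α) (hβ : 0 < β)
    (hgα : ∀ y ∈ Icc (0:ℝ) β, g y ≤ α * y ^ 2)
    (hφ'g : ∀ t ≥ (0:ℝ), φ' t ≤ g (φ t)) :
    ∀ t : ℝ, (Λ / β) * Real.exp (α * Λ) < t →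
      φ t ≤ (Real.exp (α * Λ) - 1) / (α * t) := by
  intro t ht
  have hΛ0 : 0 ≤ Λ := by
    rw [hΛ]; exact setIntegral_nonneg measurableSet_Ioi (fun x hx => hφ_nonneg x (le_of_lt hx))
  have ht0 : 0 < t := lt_of_le_of_lt (by positivity) ht
  have hcont : ContinuousOn φ (Ici 0) := fun u hu => (hφ_deriv u hu).continuousWithinAt
  -- the integral of φ over any subset of (0,∞) is at most Λ
  have hsub : ∀ A : Set ℝ, A ⊆ Ioi 0 → ∫ x in A, φ x ≤ Λ := by
    intro A hA
    rw [hΛ]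
    refine setIntegral_mono_set hint ?_ (HasSubset.Subset.eventuallyLE hA)
    exact (ae_restrict_iff' measurableSet_Ioi).2 (Filter.Eventually.of_forall
      (fun x hx => hφ_nonneg x (le_of_lt hx)))
  set c : ℝ := β * Real.exp (-(α * Λ)) with hc_def
  have hc0 : 0 < c := by positivity
  have hcβ : c ≤ β := by
    have : Real.exp (-(α * Λ)) ≤ 1 := Real.exp_le_one_iff.2 (by nlinarith)
    nlinarith
  have hct : Λ < c * t := by
    have h1 := mul_lt_mul_of_pos_right ht hc0
    have h2 : Λ / β * Real.exp (α * Λ) * c = Λ := by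
      rw [hc_def, Real.exp_neg]
      field_simp
    rw [h2] at h1
    linarith [h1]
  -- Step 1 : find s ∈ (0,t) with φ s < c
  obtain ⟨s, hs_mem, hφs⟩ : ∃ s ∈ Ioo (0:ℝ) t, φ s < c := by
    by_contra h
    push_neg at h
    have h1 : c * t ≤ ∫ x in Ioo (0:ℝ) t, φ x := by
      have : ∫ x in Ioo (0:ℝ) t, c ≤ ∫ x in Ioo (0:ℝ) t, φ x := by
        refine setIntegral_mono_on (integrableOn_const ?_)
          (hint.mono_set Ioo_subset_Ioi_self) measurableSet_Ioo h
        rw [Real.volume_Ioo]; exact ENNReal.ofReal_ne_top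
      rwa [setIntegral_const, Real.volume_real_Ioo_of_le ht0.le, sub_zero,
        smul_eq_mul, mul_comm] at this
    have h2 := hsub (Ioo 0 t) Ioo_subset_Ioi_self
    linarith
  obtain ⟨hs0, hst⟩ := hs_mem
  have hφtβ : φ t ≤ β := by
    set S : Set ℝ := {u | u ∈ Icc s t ∧ ∀ v ∈ Icc s u, φ v ≤ β} with hS_def
    have hsS : s ∈ S := by
      refine ⟨⟨le_refl s, hst.le⟩, fun v hv => ?_⟩
      have : v = s := le_antisymm hv.2 hv.1
      rw [this]; linarith
    have hbddS : BddAbove S := ⟨t, fun u hu => hu.1.2⟩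
    set u₁ := sSup S with hu₁_def
    have hsu₁ : s ≤ u₁ := le_csSup hbddS hsS
    have hu₁t : u₁ ≤ t := csSup_le ⟨s, hsS⟩ (fun u hu => hu.1.2)
    have hu₁0 : 0 < u₁ := lt_of_lt_of_le hs0 hsu₁
    have hA : ∀ v ∈ Ico s u₁, φ v ≤ β := by
      intro v hv
      obtain ⟨u, huS, hvu⟩ := exists_lt_of_lt_csSup ⟨s, hsS⟩ hv.2
      exact huS.2 v ⟨hv.1, hvu.le⟩
    have hB : φ u₁ ≤ β := by
      rcases eq_or_lt_of_le hsu₁ with h | h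
      · rw [← h]; linarith
      · have htd : Tendsto φ (nhdsWithin u₁ (Iio u₁)) (nhds (φ u₁)) :=
          ((hcont.continuousAt (Ici_mem_nhds hu₁0)).continuousWithinAt).tendsto
        refine le_of_tendsto htd ?_
        filter_upwards [Ioo_mem_nhdsLT h] with v hv
        exact hA v ⟨hv.1.le, hv.2⟩
    have hAB : ∀ v ∈ Icc s u₁, φ v ≤ β := by
      intro v hv
      rcases eq_or_lt_of_le hv.2 with h | h
      · rw [h]; exact hB
      · exact hA v ⟨hv.1, h⟩
    -- Gronwall bound on [s, u₁]
    have hgron : φ u₁ < β := by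
      set Φ : ℝ → ℝ := fun u => ∫ x in s..u, φ x with hΦ_def
      set ψ : ℝ → ℝ := fun u => φ u * Real.exp (-(α * Φ u)) with hψ_def
      have hΦint : ∀ u, s ≤ u → IntervalIntegrable φ volume s u := by
        intro u hu
        refine (hint.mono_set ?_).intervalIntegrable
        rw [uIcc_of_le hu]
        exact fun x hx => lt_of_lt_of_le hs0 hx.1
      have hΦd : ∀ u ∈ Ioo s u₁, HasDerivAt Φ (φ u) u := by
        intro u hu
        have h0u : (0:ℝ) < u := lt_trans hs0 hu.1
        refine intervalIntegral.integral_hasDerivAt_right (hΦint u hu.1.le) ?_ ?_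
        · exact ContinuousOn.stronglyMeasurableAtFilter isOpen_Ioi
            (hcont.mono (fun x hx => le_of_lt hx)) u h0u
        · exact hcont.continuousAt (Ici_mem_nhds h0u)
      have hψanti : AntitoneOn ψ (Icc s u₁) := by
        have hΦcont : ContinuousOn Φ (Icc s u₁) := by
          have := intervalIntegral.continuousOn_primitive_interval
            (f := φ) (μ := volume) (a := s) (b := u₁) ?_
          · rwa [uIcc_of_le hsu₁] at this
          · rw [uIcc_of_le hsu₁]
            exact hint.mono_set (fun x hx => lt_of_lt_of_le hs0 hx.1)
        have hψcont : ContinuousOn ψ (Icc s u₁) :=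
          ((hcont.mono (fun x hx => le_of_lt (lt_of_lt_of_le hs0 hx.1))).mul
            (((hΦcont.const_smul α).neg).rexp))
        have hint_io : interior (Icc s u₁) = Ioo s u₁ := interior_Icc
        have hψd : ∀ u ∈ Ioo s u₁, HasDerivAt ψ
            (φ' u * Real.exp (-(α * Φ u)) + φ u * (Real.exp (-(α * Φ u)) * -(α * φ u))) u := by
          intro u hu
          have h0u : (0:ℝ) < u := lt_trans hs0 hu.1
          have hφd : HasDerivAt φ (φ' u) u :=
            (hφ_deriv u h0u.le).hasDerivAt (Ici_mem_nhds h0u)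
          have hed : HasDerivAt (fun v => Real.exp (-(α * Φ v)))
              (Real.exp (-(α * Φ u)) * -(α * φ u)) u :=
            (((hΦd u hu).const_mul α).neg).exp
          exact hφd.mul hed
        refine antitoneOn_of_deriv_nonpos (convex_Icc s u₁) hψcont ?_ ?_
        · rw [hint_io]
          exact fun u hu => ((hψd u hu).differentiableAt).differentiableWithinAt
        · rw [hint_io]
          intro u hu
          rw [(hψd u hu).deriv]
          have h0u : (0:ℝ) < u := lt_trans hs0 hu.1
          have hφu0 : 0 ≤ φ u := hφ_nonneg u h0u.le
          have hφuβ : φ u ≤ β := hAB u ⟨hu.1.le, hu.2.le⟩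
          have h1 : φ' u ≤ α * (φ u) ^ 2 :=
            (hφ'g u h0u.le).trans (hgα (φ u) ⟨hφu0, hφuβ⟩)
          have h2 : (0:ℝ) < Real.exp (-(α * Φ u)) := Real.exp_pos _
          nlinarith [h2]
      have h1 : ψ u₁ ≤ ψ s := hψanti ⟨le_refl s, hsu₁⟩ ⟨hsu₁, le_refl u₁⟩ hsu₁
      have hΦs : Φ s = 0 := intervalIntegral.integral_same
      have hΦu₁Λ : Φ u₁ ≤ Λ := by
        have : Φ u₁ = ∫ x in Ioc s u₁, φ x := intervalIntegral.integral_of_le hsu₁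
        rw [this]
        exact hsub _ (fun x hx => lt_trans hs0 hx.1)
      have hψs : ψ s = φ s := by
        simp [hψ_def, hΦs]
      have hexp : Real.exp (α * Φ u₁) ≤ Real.exp (α * Λ) :=
        Real.exp_le_exp.2 (by nlinarith)
      have hφu₁0 : 0 ≤ φ u₁ := hφ_nonneg u₁ hu₁0.le
      have h2 : φ u₁ ≤ φ s * Real.exp (α * Φ u₁) := by
        have h3 : ψ u₁ * Real.exp (α * Φ u₁) ≤ φ s * Real.exp (α * Φ u₁) := by
          rw [← hψs]; exact mul_le_mul_of_nonneg_right h1 (Real.exp_pos _).le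
        have h4 : ψ u₁ * Real.exp (α * Φ u₁) = φ u₁ := by
          rw [hψ_def]
          simp only
          rw [mul_assoc, ← Real.exp_add]
          simp
        rwa [h4] at h3
      have hφs0 : 0 ≤ φ s := hφ_nonneg s hs0.le
      calc φ u₁ ≤ φ s * Real.exp (α * Φ u₁) := h2
        _ ≤ φ s * Real.exp (α * Λ) := mul_le_mul_of_nonneg_left hexp hφs0
        _ < c * Real.exp (α * Λ) := by
            exact mul_lt_mul_of_pos_right hφs (Real.exp_pos _)
        _ = β := by rw [hc_def, Real.exp_neg]; field_simp
    -- continuation: u₁ = t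
    rcases eq_or_lt_of_le hu₁t with h | h
    · rw [← h]; exact hB
    · exfalso
      have hcu₁ : ContinuousAt φ u₁ := hcont.continuousAt (Ici_mem_nhds hu₁0)
      have hev : ∀ᶠ v in nhds u₁, φ v < β := hcu₁.eventually_lt_const hgron
      obtain ⟨δ, hδ0, hδ⟩ := Metric.eventually_nhds_iff.mp hev
      set u₂ := min t (u₁ + δ/2) with hu₂_def
      have hu₁u₂ : u₁ < u₂ := lt_min h (by linarith)
      have hu₂S : u₂ ∈ S := by
        refine ⟨⟨le_trans hsu₁ hu₁u₂.le, min_le_left _ _⟩, fun v hv => ?_⟩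
        rcases le_or_gt v u₁ with hv1 | hv1
        · exact hAB v ⟨hv.1, hv1⟩
        · refine (hδ ?_).le
          rw [Real.dist_eq, abs_of_pos (by linarith)]
          have : v ≤ u₁ + δ/2 := le_trans hv.2 (min_le_right _ _)
          linarith
      exact absurd (le_csSup hbddS hu₂S) (not_le.mpr hu₁u₂)
  set b := φ t with hb_def
  have hb0 : 0 ≤ b := hφ_nonneg t ht0.le
  set y : ℝ → ℝ := fun u => b / (1 + α * b * (t - u)) with hy_def
  have hD : ∀ u ≤ t, 0 < 1 + α * b * (t - u) := by
    intro u hu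
    nlinarith [mul_nonneg (mul_nonneg hα.le hb0) (sub_nonneg.2 hu)]
  have hyd : ∀ u ≤ t, HasDerivAt y (α * (y u)^2) u := by
    intro u hu
    have hDu := hD u hu
    have hdd : HasDerivAt (fun v => 1 + α * b * (t - v)) (-(α * b)) u := by
      simpa using (((hasDerivAt_id u).const_sub t).const_mul (α * b)).const_add 1
    have := (hasDerivAt_const u b).div hdd (ne_of_gt hDu)
    exact this.congr_deriv (by
      simp only [hy_def]
      field_simp
      ring)
  have hycont : ContinuousOn y (Icc 0 t) := by
    intro u hu
    exact ((hyd u hu.2).continuousAt).continuousWithinAt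
  have hyb : ∀ u ≤ t, y u ≤ b := by
    intro u hu
    rw [hy_def]
    exact div_le_self hb0 (by nlinarith [mul_nonneg (mul_nonneg hα.le hb0) (sub_nonneg.2 hu)])
  have hy0 : ∀ u ≤ t, 0 ≤ y u := by
    intro u hu
    exact div_nonneg hb0 (hD u hu).le
  -- comparison: y ≤ φ on [0, t]
  have hcomp : ∀ u ∈ Icc (0:ℝ) t, y u ≤ φ u := by
    intro u₀ hu₀
    by_contra hneg
    push_neg at hneg
    have hyt : y t = φ t := by rw [hy_def]; simp [hb_def]
    have hu₀t : u₀ < t := by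
      rcases eq_or_lt_of_le hu₀.2 with h | h
      · exfalso; rw [h, hyt] at hneg; exact lt_irrefl _ hneg
      · exact h
    set w : ℝ → ℝ := fun u => φ u - y u with hw_def
    have hwu₀ : w u₀ < 0 := by simp [hw_def]; linarith
    set R : Set ℝ := {u | u ∈ Icc u₀ t ∧ 0 ≤ w u} with hR_def
    have htR : t ∈ R := ⟨⟨hu₀t.le, le_refl t⟩, by simp [hw_def, hyt]⟩
    have hbddR : BddBelow R := ⟨u₀, fun u hu => hu.1.1⟩
    have hclosed : IsClosed R := by
      have hwcont : ContinuousOn w (Icc u₀ t) := by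
        refine (hcont.mono ?_).sub (hycont.mono ?_)
        · exact fun x hx => le_trans hu₀.1 hx.1
        · exact fun x hx => ⟨le_trans hu₀.1 hx.1, hx.2⟩
      exact hwcont.preimage_isClosed_of_isClosed isClosed_Icc isClosed_Ici
    set u₁ := sInf R with hu₁_def
    have hu₁R : u₁ ∈ R := hclosed.csInf_mem ⟨t, htR⟩ hbddR
    have hu₀u₁ : u₀ < u₁ := by
      rcases eq_or_lt_of_le (le_csInf ⟨t, htR⟩ (fun u hu => hu.1.1) : u₀ ≤ u₁) with h | h
      · exfalso
        have he : u₀ = u₁ := h.trans hu₁_def.symm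
        have hu₀R : u₀ ∈ R := by rw [he]; exact hu₁R
        linarith [hu₀R.2]
      · exact h
    have hIco : ∀ v ∈ Ico u₀ u₁, w v < 0 := by
      intro v hv
      by_contra hc
      push_neg at hc
      have : v ∈ R := ⟨⟨hv.1, le_trans hv.2.le hu₁R.1.2⟩, hc⟩
      exact absurd (csInf_le hbddR this) (not_le.mpr hv.2)
    have hanti : AntitoneOn w (Icc u₀ u₁) := by
      have hwcont : ContinuousOn w (Icc u₀ u₁) := by
        refine (hcont.mono ?_).sub (hycont.mono ?_)
        · exact fun x hx => le_trans hu₀.1 hx.1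
        · exact fun x hx => ⟨le_trans hu₀.1 hx.1, le_trans hx.2 hu₁R.1.2⟩
      have hwd : ∀ u ∈ Ioo u₀ u₁, HasDerivAt w (φ' u - α * (y u)^2) u := by
        intro u hu
        have h0u : (0:ℝ) < u := lt_of_le_of_lt hu₀.1 hu.1
        have hut : u ≤ t := le_trans hu.2.le hu₁R.1.2
        exact ((hφ_deriv u h0u.le).hasDerivAt (Ici_mem_nhds h0u)).sub (hyd u hut)
      refine antitoneOn_of_deriv_nonpos (convex_Icc u₀ u₁) hwcont ?_ ?_
      · rw [interior_Icc]
        exact fun u hu => ((hwd u hu).differentiableAt).differentiableWithinAt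
      · rw [interior_Icc]
        intro u hu
        rw [(hwd u hu).deriv]
        have h0u : (0:ℝ) < u := lt_of_le_of_lt hu₀.1 hu.1
        have hut : u ≤ t := le_trans hu.2.le hu₁R.1.2
        have hwneg : w u < 0 := hIco u ⟨hu.1.le, hu.2⟩
        have hφu0 : 0 ≤ φ u := hφ_nonneg u h0u.le
        have hφy : φ u < y u := by simp [hw_def] at hwneg; linarith
        have hφβ : φ u ≤ β := le_trans hφy.le (le_trans (hyb u hut) hφtβ)
        have h1 : φ' u ≤ α * (φ u) ^ 2 :=
          (hφ'g u h0u.le).trans (hgα (φ u) ⟨hφu0, hφβ⟩)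
        have h2 : (φ u)^2 ≤ (y u)^2 := pow_le_pow_left₀ hφu0 hφy.le 2
        linarith [mul_le_mul_of_nonneg_left h2 hα.le]
    have hfin : w u₁ ≤ w u₀ :=
      hanti ⟨le_refl u₀, hu₀u₁.le⟩ ⟨hu₀u₁.le, le_refl u₁⟩ hu₀u₁.le
    linarith [hu₁R.2]
  -- integration
  have hyint : IntervalIntegrable y volume 0 t := by
    rw [intervalIntegrable_iff_integrableOn_Icc_of_le ht0.le]
    exact hycont.integrableOn_Icc
  have hAnti : ∀ u ∈ uIcc (0:ℝ) t,
      HasDerivAt (fun v => -(Real.log (1 + α * b * (t - v))) / α) (y u) u := by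
    intro u hu
    rw [uIcc_of_le ht0.le] at hu
    have hDu := hD u hu.2
    have hdd : HasDerivAt (fun v => 1 + α * b * (t - v)) (-(α * b)) u := by
      simpa using (((hasDerivAt_id u).const_sub t).const_mul (α * b)).const_add 1
    have hld := (hdd.log (ne_of_gt hDu)).neg.div_const α
    exact hld.congr_deriv (by
      simp only [hy_def]
      field_simp)
  have hcalc : ∫ u in (0:ℝ)..t, y u = Real.log (1 + α * b * t) / α := by
    rw [intervalIntegral.integral_eq_sub_of_hasDerivAt hAnti hyint]
    simp [Real.log_one]
    ring
  have hle : ∫ u in (0:ℝ)..t, y u ≤ Λ := by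
    rw [intervalIntegral.integral_of_le ht0.le, integral_Ioc_eq_integral_Ioo]
    calc ∫ u in Ioo (0:ℝ) t, y u ≤ ∫ u in Ioo (0:ℝ) t, φ u := by
          refine setIntegral_mono_on ((hycont.integrableOn_Icc).mono_set Ioo_subset_Icc_self)
            (hint.mono_set (fun x hx => hx.1)) measurableSet_Ioo
            (fun x hx => hcomp x ⟨hx.1.le, hx.2.le⟩)
      _ ≤ Λ := hsub _ Ioo_subset_Ioi_self
  have hlog : Real.log (1 + α * b * t) ≤ α * Λ := by
    rw [hcalc] at hle
    calc Real.log (1 + α * b * t) = (Real.log (1 + α * b * t) / α) * α := by field_simp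
      _ ≤ Λ * α := mul_le_mul_of_nonneg_right hle hα.le
      _ = α * Λ := mul_comm _ _
  have hDt : (0:ℝ) < 1 + α * b * t := by
    nlinarith [mul_nonneg (mul_nonneg hα.le hb0) ht0.le]
  have hexp : 1 + α * b * t ≤ Real.exp (α * Λ) := by
    rwa [← Real.log_le_iff_le_exp hDt]
  rw [le_div_iff₀ (by positivity)]
  nlinarith

end Stmt0Aux

open Filter in
/-- Let `φ : [0,∞) → [0,∞)` be differentiable and `g : [0,∞) → [0,∞)`
locally Lipschitz. Suppose `Λ := ∫₀^∞ φ(t) dt < ∞`, `g(y) ≤ α y²` for `y ∈ [0,β]`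
(with `α, β > 0`), and `φ'(t) ≤ g(φ(t))` for all `t ≥ 0`. Then for every
`t ≥ (Λ/β) exp(α Λ)` one has `φ(t) ≤ (exp(α Λ) − 1)/(α t)`. -/
theorem stmt0 (φ φ' g : ℝ → ℝ) (α β Λ : ℝ)
    (hφ_nonneg : ∀ t ≥ (0:ℝ), 0 ≤ φ t)
    (hg_nonneg : ∀ y ≥ (0:ℝ), 0 ≤ g y)
    (hφ_deriv : ∀ t ≥ (0:ℝ), HasDerivWithinAt φ (φ' t) (Ici 0) t)
    (hg_lip : LocallyLipschitzOn (Ici 0) g)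
    (hint : IntegrableOn φ (Ioi 0) volume)
    (hΛ : Λ = ∫ t in Ioi (0:ℝ), φ t)
    (hα : 0 < α) (hβ : 0 < β)
    (hgα : ∀ y ∈ Icc (0:ℝ) β, g y ≤ α * y ^ 2)
    (hφ'g : ∀ t ≥ (0:ℝ), φ' t ≤ g (φ t)) :
    ∀ t : ℝ, (Λ / β) * Real.exp (α * Λ) ≤ t →
      φ t ≤ (Real.exp (α * Λ) - 1) / (α * t) := by
  have key := Stmt0Aux.aux0 φ φ' g α β Λ hφ_nonneg hφ_deriv hint hΛ hα hβ hgα hφ'g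
  have hΛ0 : 0 ≤ Λ := by
    rw [hΛ]; exact setIntegral_nonneg measurableSet_Ioi (fun x hx => hφ_nonneg x (le_of_lt hx))
  intro t ht
  rcases lt_or_eq_of_le ht with hlt | heq
  · exact key t hlt
  · have ht0 : 0 ≤ t := le_trans (by positivity) ht
    have hφt : Tendsto φ (nhdsWithin t (Ioi t)) (nhds (φ t)) := by
      have h1 : ContinuousWithinAt φ (Ici 0) t := (hφ_deriv t ht0).continuousWithinAt
      exact (h1.mono (fun x (hx : x ∈ Ioi t) => le_trans ht0 hx.le)).tendsto
    have hev : ∀ᶠ t' in nhdsWithin t (Ioi t),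
        φ t' ≤ (Real.exp (α * Λ) - 1) / (α * t') := by
      filter_upwards [self_mem_nhdsWithin] with t' ht'
      exact key t' (lt_of_le_of_lt ht ht')
    rcases eq_or_lt_of_le hΛ0 with hΛe | hΛp
    · have hz : Real.exp (α * Λ) - 1 = 0 := by rw [← hΛe]; simp
      rw [hz, zero_div]
      refine le_of_tendsto hφt ?_
      filter_upwards [hev] with t' ht'
      rwa [hz, zero_div] at ht'
    · have htpos : 0 < t := by
        rw [← heq]; positivity
      have hRHS : Tendsto (fun t' => (Real.exp (α * Λ) - 1) / (α * t'))
          (nhdsWithin t (Ioi t)) (nhds ((Real.exp (α * Λ) - 1) / (α * t))) := by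
        refine Tendsto.div tendsto_const_nhds ?_ (by positivity)
        exact ((continuous_const.mul continuous_id).tendsto t).mono_left nhdsWithin_le_nhds
      exact le_of_tendsto_of_tendsto hφt hRHS hev
end

section
/- Let H be a complex Hilbert space, A a bounded nonnegative self-adjoint operator on H, T > 0, and f : [0,T] → H continuous. Define w(t) := ∫₀ᵗ e^{−(t−s)A} f(s) ds (Bochner integral). Then for every α ∈ [0,1) and every t ∈ [0,T], ‖A^α w(t)‖ ≤ (t^{1−α}/(1−α)) · sup_{s ∈ [0,T]} ‖f(s)‖. -/
open MeasureTheory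

set_option maxHeartbeats 1000000
set_option synthInstance.maxHeartbeats 200000

private lemma key_ineq {α τ x : ℝ} (hα0 : 0 ≤ α) (hα1 : α ≤ 1) (hτ : 0 < τ) (hx : 0 ≤ x) :
    x ^ α * Real.exp (-(τ * x)) ≤ τ ^ (-α) := by
  have hy : 0 ≤ τ * x := mul_nonneg hτ.le hx
  have h1 : (τ * x) ^ α ≤ Real.exp (τ * x) := by
    rcases le_total (τ * x) 1 with h | h
    · exact (Real.rpow_le_one hy h hα0).trans (Real.one_le_exp hy)
    · calc (τ * x) ^ α ≤ (τ * x) ^ (1 : ℝ) :=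
            Real.rpow_le_rpow_of_exponent_le h hα1
        _ = τ * x := Real.rpow_one _
        _ ≤ Real.exp (τ * x) := by
            have := Real.add_one_le_exp (τ * x); linarith
  have h2 : (τ * x) ^ α * Real.exp (-(τ * x)) ≤ 1 := by
    rw [Real.exp_neg, ← div_eq_mul_inv, div_le_one (Real.exp_pos _)]
    exact h1
  have hττ : τ ^ (-α) * τ ^ α = 1 := by
    rw [← Real.rpow_add hτ]; simp
  have hmul : (τ * x) ^ α = τ ^ α * x ^ α := Real.mul_rpow hτ.le hx
  have hτα : 0 ≤ τ ^ (-α) := Real.rpow_nonneg hτ.le _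
  calc x ^ α * Real.exp (-(τ * x))
      = τ ^ (-α) * ((τ * x) ^ α * Real.exp (-(τ * x))) := by
        rw [hmul, ← mul_assoc, ← mul_assoc, hττ, one_mul]
    _ ≤ τ ^ (-α) * 1 := by
        exact mul_le_mul_of_nonneg_left h2 hτα
    _ = τ ^ (-α) := mul_one _

/-- Let `A` be a bounded nonnegative self-adjoint operator on a complex
Hilbert space `H`, `T > 0`, and `f : [0,T] → H` continuous. With
`w(t) := ∫₀ᵗ e^{−(t−s)A} f(s) ds`, for every `α ∈ [0,1)` and `t ∈ [0,T]`,
`‖A^α w(t)‖ ≤ (t^{1−α}/(1−α)) · sup_{s ∈ [0,T]} ‖f(s)‖`. -/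
theorem stmt5 {H : Type*} [NormedAddCommGroup H] [InnerProductSpace ℂ H] [CompleteSpace H]
    (A : H →L[ℂ] H) (hA : 0 ≤ A) (T : ℝ) (hT : 0 < T)
    (f : ℝ → H) (hf : ContinuousOn f (Set.Icc 0 T))
    (w : ℝ → H)
    (hw : ∀ t, w t = ∫ s in (0:ℝ)..t, (cfc (fun x : ℝ => Real.exp (-((t - s) * x))) A) (f s)) :
    ∀ α : ℝ, 0 ≤ α → α < 1 → ∀ t ∈ Set.Icc (0:ℝ) T,
      ‖(cfc (fun x : ℝ => x ^ α) A) (w t)‖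
        ≤ (t ^ (1 - α) / (1 - α)) * ⨆ s : Set.Icc (0:ℝ) T, ‖f s‖ := by
  intro α hα0 hα1 t ht
  obtain ⟨ht0, htT⟩ := ht
  have hsa : IsSelfAdjoint A := IsSelfAdjoint.of_nonneg hA
  have hsp : ∀ x ∈ spectrum ℝ A, 0 ≤ x := spectrum_nonneg_of_nonneg hA
  set M : ℝ := ⨆ s : Set.Icc (0:ℝ) T, ‖f s‖ with hM_def
  -- boundedness of f and properties of M
  have hbdd : BddAbove (Set.range fun s : Set.Icc (0:ℝ) T => ‖f s‖) := by
    have h1 : IsCompact ((fun s => ‖f s‖) '' Set.Icc (0:ℝ) T) :=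
      isCompact_Icc.image_of_continuousOn hf.norm
    have h2 := h1.bddAbove
    rwa [Set.image_eq_range] at h2
  have hM : ∀ s ∈ Set.Icc (0:ℝ) T, ‖f s‖ ≤ M := fun s hs =>
    le_ciSup hbdd (⟨s, hs⟩ : Set.Icc (0:ℝ) T)
  have hM0 : 0 ≤ M := (norm_nonneg _).trans (hM 0 ⟨le_refl 0, hT.le⟩)
  -- continuity of x ↦ x ^ α
  have hcont_pow : Continuous fun x : ℝ => x ^ α :=
    continuous_iff_continuousAt.mpr fun x => Real.continuousAt_rpow_const x α (Or.inr hα0)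
  -- rewrite the semigroup via operator exponential
  have hexp_eq : ∀ τ : ℝ, cfc (fun x : ℝ => Real.exp (-(τ * x))) A
      = NormedSpace.exp ((-τ : ℝ) • A) := by
    intro τ
    rw [← CFC.real_exp_eq_normedSpace_exp, ← cfc_comp_smul (-τ : ℝ) Real.exp A]
    congr 1
    ext x
    simp [neg_mul]
  -- continuity of the integrand
  have hFcont : ContinuousOn
      (fun s => (cfc (fun x : ℝ => Real.exp (-((t - s) * x))) A) (f s)) (Set.Icc 0 t) := by
    have hop : Continuous fun s : ℝ => cfc (fun x : ℝ => Real.exp (-((t - s) * x))) A := by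
      have : (fun s : ℝ => cfc (fun x : ℝ => Real.exp (-((t - s) * x))) A)
          = fun s : ℝ => NormedSpace.exp ((-(t - s) : ℝ) • A) := by
        funext s; exact hexp_eq (t - s)
      rw [this]
      exact (continuous_iff_continuousAt.2 fun x => (NormedSpace.exp_analytic (𝕂 := ℂ) x).continuousAt).comp (by fun_prop)
    exact hop.continuousOn.clm_apply (hf.mono (Set.Icc_subset_Icc le_rfl htT))
  have hFint : IntervalIntegrable
      (fun s => (cfc (fun x : ℝ => Real.exp (-((t - s) * x))) A) (f s)) volume 0 t := by
    apply ContinuousOn.intervalIntegrable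
    rwa [Set.uIcc_of_le ht0]
  -- pull the operator inside the integral
  have hcomm : (cfc (fun x : ℝ => x ^ α) A) (w t)
      = ∫ s in (0:ℝ)..t, (cfc (fun x : ℝ => x ^ α * Real.exp (-((t - s) * x))) A) (f s) := by
    rw [hw t, ← ContinuousLinearMap.intervalIntegral_comp_comm _ hFint]
    apply intervalIntegral.integral_congr
    intro s _
    dsimp only
    rw [cfc_mul (fun x : ℝ => x ^ α) (fun x : ℝ => Real.exp (-((t - s) * x))) A
      hcont_pow.continuousOn (by fun_prop), ContinuousLinearMap.mul_apply]
  -- pointwise a.e. bound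
  have haebound : ∀ᵐ s ∂(volume.restrict (Set.Icc (0:ℝ) t)),
      ‖(cfc (fun x : ℝ => x ^ α * Real.exp (-((t - s) * x))) A) (f s)‖
        ≤ (t - s) ^ (-α) * M := by
    have hne : ∀ᵐ s : ℝ ∂volume, s ≠ t := by
      rw [ae_iff]
      simp only [not_not]
      rw [show {a : ℝ | a = t} = {t} from by ext a; simp]
      exact Real.volume_singleton
    filter_upwards [ae_restrict_of_ae hne, ae_restrict_mem measurableSet_Icc] with s hsne hs
    have hτ : 0 < t - s := lt_of_le_of_ne (sub_nonneg.mpr hs.2) (fun h => hsne (by linarith))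
    have hnorm_op : ‖cfc (fun x : ℝ => x ^ α * Real.exp (-((t - s) * x))) A‖ ≤ (t - s) ^ (-α) := by
      apply norm_cfc_le (Real.rpow_nonneg hτ.le _)
      intro x hx
      have hx0 : 0 ≤ x := hsp x hx
      rw [Real.norm_eq_abs, abs_of_nonneg (mul_nonneg (Real.rpow_nonneg hx0 _) (Real.exp_nonneg _))]
      exact key_ineq hα0 hα1.le hτ hx0
    calc ‖(cfc (fun x : ℝ => x ^ α * Real.exp (-((t - s) * x))) A) (f s)‖
        ≤ ‖cfc (fun x : ℝ => x ^ α * Real.exp (-((t - s) * x))) A‖ * ‖f s‖ :=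
          ContinuousLinearMap.le_opNorm _ _
      _ ≤ (t - s) ^ (-α) * M :=
          mul_le_mul hnorm_op (hM s ⟨hs.1, hs.2.trans htT⟩) (norm_nonneg _)
            (Real.rpow_nonneg hτ.le _)
  -- integrability of the bound
  have hbint : IntervalIntegrable (fun s => (t - s) ^ (-α) * M) volume 0 t := by
    have h1 : IntervalIntegrable (fun x : ℝ => x ^ (-α)) volume 0 t :=
      intervalIntegral.intervalIntegrable_rpow' (by linarith)
    have h2 := (h1.comp_sub_left t)
    simp only [sub_self, sub_zero] at h2
    exact (h2.mul_const M).symm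
  -- integrability of the integrand norms
  have hFαint : IntervalIntegrable
      (fun s => (cfc (fun x : ℝ => x ^ α * Real.exp (-((t - s) * x))) A) (f s)) volume 0 t := by
    have : (fun s => (cfc (fun x : ℝ => x ^ α * Real.exp (-((t - s) * x))) A) (f s))
        = fun s => (cfc (fun x : ℝ => x ^ α) A)
            ((cfc (fun x : ℝ => Real.exp (-((t - s) * x))) A) (f s)) := by
      funext s
      rw [cfc_mul _ _ A hcont_pow.continuousOn (by fun_prop), ContinuousLinearMap.mul_apply]
    rw [this]
    apply ContinuousOn.intervalIntegrable
    rw [Set.uIcc_of_le ht0]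
    exact (cfc (fun x : ℝ => x ^ α) A).continuous.comp_continuousOn hFcont
  -- value of the bounding integral
  have hval : (∫ s in (0:ℝ)..t, (t - s) ^ (-α)) = t ^ (1 - α) / (1 - α) := by
    rw [intervalIntegral.integral_comp_sub_left (fun u : ℝ => u ^ (-α)) t]
    simp only [sub_self, sub_zero]
    rw [integral_rpow (Or.inl (by linarith : (-1:ℝ) < -α)),
      Real.zero_rpow (by intro h; apply absurd h; intro h'; nlinarith : (-α + 1 : ℝ) ≠ 0),
      neg_add_eq_sub]
    ring
  -- final estimate
  calc ‖(cfc (fun x : ℝ => x ^ α) A) (w t)‖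
      = ‖∫ s in (0:ℝ)..t, (cfc (fun x : ℝ => x ^ α * Real.exp (-((t - s) * x))) A) (f s)‖ := by
        rw [hcomm]
    _ ≤ ∫ s in (0:ℝ)..t,
          ‖(cfc (fun x : ℝ => x ^ α * Real.exp (-((t - s) * x))) A) (f s)‖ :=
        intervalIntegral.norm_integral_le_integral_norm ht0
    _ ≤ ∫ s in (0:ℝ)..t, (t - s) ^ (-α) * M :=
        intervalIntegral.integral_mono_ae_restrict ht0 hFαint.norm hbint haebound
    _ = (∫ s in (0:ℝ)..t, (t - s) ^ (-α)) * M := by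
        rw [intervalIntegral.integral_mul_const]
    _ = t ^ (1 - α) / (1 - α) * M := by rw [hval]
end

section
/- (Galilean invariance of the tamed Navier–Stokes equation) Let ν, κ > 0, N ≥ 0, and U, v ∈ ℝ³ be constant vectors. If (u, P) is a classical solution of the tamed Navier–Stokes equation with parameters (ν, κ, N, U), then the pair (ũ, P̃) defined by ũ(t,x) := u(t, x − t·v) + v and P̃(t,x) := P(t, x − t·v) is a classical solution of the tamed Navier–Stokes equation with parameters (ν, κ, N, U + v). -/
noncomputable section

open Set

/-- Euclidean 3-space. -/
abbrev E3 : Type := EuclideanSpace ℝ (Fin 3)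

/-- The `i`-th standard basis vector of `ℝ³`. -/
def e3 (i : Fin 3) : E3 := EuclideanSpace.single i 1

/-- Directional (convective) derivative `(v·∇)f` of a vector field `f` at `x`:
the Fréchet derivative of `f` at `x` applied to the vector `v`. -/
def conv (v : E3) (f : E3 → E3) (x : E3) : E3 := fderiv ℝ f x v

/-- Componentwise Laplacian `Δf = ∑ᵢ ∂ᵢ∂ᵢ f` of a vector field `f` at `x`. -/
def lap3 (f : E3 → E3) (x : E3) : E3 :=
  ∑ i : Fin 3, fderiv ℝ (fun y => fderiv ℝ f y (e3 i)) x (e3 i)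

/-- Divergence `div f = ∑ᵢ ∂ᵢ fᵢ` of a vector field `f` at `x`. -/
def div3 (f : E3 → E3) (x : E3) : ℝ :=
  ∑ i : Fin 3, fderiv ℝ f x (e3 i) i

/-- The taming function `g^{ν,κ}_N(r) = (κ/ν)·max(r − N, 0)`. -/
def tamingFn (ν κ N r : ℝ) : ℝ := (κ / ν) * max (r - N) 0

/-- `S(t) = sup_{x ∈ ℝ³} |u(t,x) − U|²`. -/
def supSq (U : E3) (u : ℝ → E3 → E3) (t : ℝ) : ℝ := ⨆ x : E3, ‖u t x - U‖ ^ 2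

/-- `(u, P)` is a classical solution of the tamed Navier–Stokes equation on `ℝ³`
with parameters `(ν, κ, N, U)`: `u` is `C²`, `P` is `C¹`, `x ↦ u(t,x) − U` is bounded for
each `t`, and for all `(t,x)`,
`∂ₜu = ν Δu − (u·∇)u + ∇P − g^{ν,κ}_N(S(t))·(u − U)` and `div u = 0`. -/
def IsTamedNSSolution (ν κ N : ℝ) (U : E3) (u : ℝ → E3 → E3) (P : ℝ → E3 → ℝ) : Prop :=
  ContDiff ℝ 2 (fun p : ℝ × E3 => u p.1 p.2) ∧
  ContDiff ℝ 1 (fun p : ℝ × E3 => P p.1 p.2) ∧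
  (∀ t : ℝ, ∃ M : ℝ, ∀ x : E3, ‖u t x - U‖ ≤ M) ∧
  (∀ (t : ℝ) (x : E3),
    deriv (fun s => u s x) t =
      ν • lap3 (u t) x - conv (u t x) (u t) x + gradient (P t) x
        - tamingFn ν κ N (supSq U u t) • (u t x - U)) ∧
  (∀ (t : ℝ) (x : E3), div3 (u t) x = 0)

/-- Translation invariance of `fderiv`. -/
lemma fderiv_shift {F : Type*} [NormedAddCommGroup F] [NormedSpace ℝ F]
    {f : E3 → F} (hf : Differentiable ℝ f) (c x : E3) :
    fderiv ℝ (fun y => f (y - c)) x = fderiv ℝ f (x - c) := by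
  have h1 : HasFDerivAt (fun y : E3 => y - c) (ContinuousLinearMap.id ℝ E3) x := by
    simpa using (hasFDerivAt_id x).sub_const c
  simpa [Function.comp_def] using ((hf (x - c)).hasFDerivAt.comp x h1).fderiv

/-- (Galilean invariance of the tamed Navier–Stokes equation.)
If `(u, P)` is a classical solution with parameters `(ν, κ, N, U)` and `v ∈ ℝ³`, then
`ũ(t,x) := u(t, x − t·v) + v`, `P̃(t,x) := P(t, x − t·v)` is a classical solution
with parameters `(ν, κ, N, U + v)`. -/
theorem stmt6 (ν κ N : ℝ) (hν : 0 < ν) (hκ : 0 < κ) (hN : 0 ≤ N) (U v : E3)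
    (u : ℝ → E3 → E3) (P : ℝ → E3 → ℝ)
    (h : IsTamedNSSolution ν κ N U u P) :
    IsTamedNSSolution ν κ N (U + v)
      (fun t x => u t (x - t • v) + v)
      (fun t x => P t (x - t • v)) := by
  obtain ⟨hu, hP, hb, hpde, hdiv⟩ := h
  have hmap : ∀ n : ℕ, ContDiff ℝ n (fun p : ℝ × E3 => ((p.1, p.2 - p.1 • v) : ℝ × E3)) :=
    fun n => contDiff_fst.prodMk (contDiff_snd.sub (contDiff_fst.smul contDiff_const))
  have hut : ∀ t, ContDiff ℝ 2 (u t) := fun t =>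
    hu.comp (contDiff_const.prodMk contDiff_id)
  have hutd : ∀ t, Differentiable ℝ (u t) := fun t => (hut t).differentiable (by norm_num)
  have hPt : ∀ t, Differentiable ℝ (P t) := fun t =>
    ((hP.comp (contDiff_const.prodMk contDiff_id)).differentiable one_ne_zero)
  have hfd : ∀ t (i : Fin 3), Differentiable ℝ (fun y => fderiv ℝ (u t) y (e3 i)) := fun t i =>
    (((hut t).fderiv_right (by norm_num)).clm_apply contDiff_const).differentiable one_ne_zero
  have key : ∀ t x, fderiv ℝ (fun y : E3 => u t (y - t • v) + v) x
      = fderiv ℝ (u t) (x - t • v) := by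
    intro t x
    rw [fderiv_add_const]
    exact fderiv_shift (hutd t) _ x
  refine ⟨(hu.comp (hmap 2)).add contDiff_const, hP.comp (hmap 1), ?_, ?_, ?_⟩
  · intro t
    obtain ⟨M, hM⟩ := hb t
    exact ⟨M, fun x => by simpa [add_sub_add_right_eq_sub] using hM (x - t • v)⟩
  · intro t x
    have hsup : supSq (U + v) (fun t x => u t (x - t • v) + v) t = supSq U u t := by
      unfold supSq
      simp_rw [add_sub_add_right_eq_sub]
      rw [iSup, iSup]
      congr 1
      have hsurj : Function.Surjective (fun x : E3 => x - t • v) :=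
        fun y => ⟨y + t • v, by simp⟩
      exact hsurj.range_comp fun y => ‖u t y - U‖ ^ 2
    have hlap : lap3 (fun y : E3 => u t (y - t • v) + v) x = lap3 (u t) (x - t • v) := by
      unfold lap3
      refine Finset.sum_congr rfl fun i _ => ?_
      have he : (fun y => fderiv ℝ (fun z : E3 => u t (z - t • v) + v) y (e3 i))
          = fun y => fderiv ℝ (u t) (y - t • v) (e3 i) := by
        funext y; rw [key]
      rw [he, show (fun y => fderiv ℝ (u t) (y - t • v) (e3 i))
            = fun y => (fun z => fderiv ℝ (u t) z (e3 i)) (y - t • v) from rfl]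
      rw [fderiv_shift (hfd t i) _ x]
    have hconv : conv (u t (x - t • v) + v) (fun y : E3 => u t (y - t • v) + v) x
        = conv (u t (x - t • v)) (u t) (x - t • v) + fderiv ℝ (u t) (x - t • v) v := by
      unfold conv
      rw [key, map_add]
    have hgrad : gradient (fun y : E3 => P t (y - t • v)) x = gradient (P t) (x - t • v) := by
      unfold gradient
      rw [fderiv_shift (hPt t) _ x]
    have hwd : Differentiable ℝ (fun p : ℝ × E3 => u p.1 p.2) := hu.differentiable (by norm_num)
    have hD := (hwd (t, x - t • v)).hasFDerivAt
    have hpath : HasDerivAt (fun s : ℝ => ((s, x - s • v) : ℝ × E3)) (((1 : ℝ), -v)) t := by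
      refine (hasDerivAt_id t).prodMk ?_
      simpa using ((hasDerivAt_id t).smul_const v).const_sub x
    have h1 : HasDerivAt (fun s => u s (x - s • v))
        (fderiv ℝ (fun p : ℝ × E3 => u p.1 p.2) (t, x - t • v) (1, -v)) t :=
      hD.comp_hasDerivAt (f := fun s : ℝ => ((s, x - s • v) : ℝ × E3)) t hpath
    have h2 : HasDerivAt (fun s => u s (x - t • v))
        (fderiv ℝ (fun p : ℝ × E3 => u p.1 p.2) (t, x - t • v) (1, 0)) t :=
      hD.comp_hasDerivAt (f := fun s : ℝ => ((s, x - t • v) : ℝ × E3)) t ((hasDerivAt_id t).prodMk (hasDerivAt_const t (x - t • v)))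
    have h3 : fderiv ℝ (u t) (x - t • v) v
        = fderiv ℝ (fun p : ℝ × E3 => u p.1 p.2) (t, x - t • v) (0, v) := by
      have hc : HasFDerivAt (u t)
          ((fderiv ℝ (fun p : ℝ × E3 => u p.1 p.2) (t, x - t • v)).comp
            (ContinuousLinearMap.inr ℝ ℝ E3)) (x - t • v) :=
        hD.comp (x - t • v) (hasFDerivAt_prodMk_right t (x - t • v))
      rw [hc.fderiv]
      simp
    have hderiv : deriv (fun s => u s (x - s • v) + v) t
        = deriv (fun s => u s (x - t • v)) t - fderiv ℝ (u t) (x - t • v) v := by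
      rw [(h1.add_const v).deriv, h2.deriv, h3,
        show ((1 : ℝ), -v) = ((1 : ℝ), (0 : E3)) + (0, -v) by simp,
        map_add, show ((0 : ℝ), -v) = -((0 : ℝ), v) by simp, map_neg]
      abel
    show deriv (fun s => u s (x - s • v) + v) t
        = ν • lap3 (fun y : E3 => u t (y - t • v) + v) x
          - conv (u t (x - t • v) + v) (fun y : E3 => u t (y - t • v) + v) x
          + gradient (fun y : E3 => P t (y - t • v)) x
          - tamingFn ν κ N (supSq (U + v) (fun t x => u t (x - t • v) + v) t)
              • (u t (x - t • v) + v - (U + v))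
    rw [hderiv, hsup, hlap, hconv, hgrad, add_sub_add_right_eq_sub, hpde t (x - t • v)]
    abel
  · intro t x
    show div3 (fun y : E3 => u t (y - t • v) + v) x = 0
    unfold div3
    have he : ∀ i : Fin 3, fderiv ℝ (fun y : E3 => u t (y - t • v) + v) x (e3 i) i
        = fderiv ℝ (u t) (x - t • v) (e3 i) i := by
      intro i; rw [key]
    simp_rw [he]
    exact hdiv t (x - t • v)


end
end

section
/- (Rotation symmetry of the tamed Navier–Stokes equation) Let ν, κ > 0, N ≥ 0, U ∈ ℝ³ a constant vector, and Q a 3×3 orthogonal matrix (Q·Qᵀ = I). If (u, P) is a classical solution of the tamed Navier–Stokes equation with parameters (ν, κ, N, U), then the pair (ũ, P̃) defined by ũ(t,x) := Qᵀ·u(t, Q·x) and P̃(t,x) := P(t, Q·x) is a classical solution of the tamed Navier–Stokes equation with parameters (ν, κ, N, Qᵀ·U). -/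
noncomputable section

open Set

open scoped RealInnerProductSpace

-- AUX (already checked)
def aclm (Q : Matrix (Fin 3) (Fin 3) ℝ) : E3 →L[ℝ] E3 :=
  LinearMap.toContinuousLinearMap (Matrix.toEuclideanLin Q)
lemma aclm_apply (Q : Matrix (Fin 3) (Fin 3) ℝ) (v : E3) :
    aclm Q v = Matrix.toEuclideanLin Q v := rfl
lemma aclm_mul (M N : Matrix (Fin 3) (Fin 3) ℝ) (v : E3) :
    aclm M (aclm N v) = aclm (M * N) v := by
  simp [aclm, Matrix.toEuclideanLin_apply, Matrix.mulVec_mulVec]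
lemma aclm_one (v : E3) : aclm 1 v = v := by
  simp [aclm, Matrix.toEuclideanLin_apply]
lemma aclm_adj (Q : Matrix (Fin 3) (Fin 3) ℝ) (w v : E3) :
    ⟪aclm Q.transpose w, v⟫ = ⟪w, aclm Q v⟫ := by
  have h : Q.conjTranspose = Q.transpose := by
    ext i j; simp [Matrix.conjTranspose_apply]
  rw [aclm_apply, aclm_apply, ← h, Matrix.toEuclideanLin_conjTranspose_eq_adjoint]
  exact LinearMap.adjoint_inner_left _ _ _
lemma aclm_e3 (Q : Matrix (Fin 3) (Fin 3) ℝ) (i : Fin 3) :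
    aclm Q (e3 i) = ∑ j : Fin 3, Q j i • e3 j := by
  ext k
  simp [aclm, Matrix.toEuclideanLin_apply, Matrix.mulVec, dotProduct, e3,
    EuclideanSpace.single_apply, Fin.sum_univ_three, PiLp.add_apply, PiLp.smul_apply]
  fin_cases k <;> fin_cases i <;> simp
lemma rot_sum {F : Type*} [AddCommGroup F] [Module ℝ F]
    (Q : Matrix (Fin 3) (Fin 3) ℝ) (hQ : Q * Q.transpose = 1)
    (T : E3 →ₗ[ℝ] E3 →ₗ[ℝ] F) :
    ∑ i : Fin 3, T (aclm Q (e3 i)) (aclm Q (e3 i)) = ∑ i : Fin 3, T (e3 i) (e3 i) := by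
  have key : ∀ j k : Fin 3, ∑ i : Fin 3, Q j i * Q k i = if j = k then 1 else 0 := by
    intro j k
    have := congrArg (fun M => M j k) hQ
    simpa [Matrix.mul_apply, Matrix.one_apply] using this
  calc ∑ i : Fin 3, T (aclm Q (e3 i)) (aclm Q (e3 i))
      = ∑ i : Fin 3, ∑ j : Fin 3, ∑ k : Fin 3, (Q j i * Q k i) • T (e3 j) (e3 k) := by
        refine Finset.sum_congr rfl fun i _ => ?_
        rw [aclm_e3]
        simp only [map_sum, map_smul, LinearMap.coe_sum, Finset.sum_apply,
          LinearMap.smul_apply, Finset.smul_sum, smul_smul]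
        rw [Finset.sum_comm]
        exact Finset.sum_congr rfl fun j _ => Finset.sum_congr rfl fun k _ => by rw [mul_comm]
    _ = ∑ j : Fin 3, ∑ k : Fin 3, (∑ i : Fin 3, Q j i * Q k i) • T (e3 j) (e3 k) := by
        rw [Finset.sum_comm]
        refine Finset.sum_congr rfl fun j _ => ?_
        rw [Finset.sum_comm]
        exact Finset.sum_congr rfl fun k _ => by rw [Finset.sum_smul]
    _ = ∑ j : Fin 3, T (e3 j) (e3 j) := by
        refine Finset.sum_congr rfl fun j _ => ?_
        rw [Finset.sum_congr rfl fun k _ => by rw [key j k]]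
        simp
lemma aclm_inv1 (Q : Matrix (Fin 3) (Fin 3) ℝ) (hQ : Q * Q.transpose = 1) (v : E3) :
    aclm Q (aclm Q.transpose v) = v := by
  rw [aclm_mul, hQ, aclm_one]
lemma aclm_inv2 (Q : Matrix (Fin 3) (Fin 3) ℝ) (hQ : Q * Q.transpose = 1) (v : E3) :
    aclm Q.transpose (aclm Q v) = v := by
  rw [aclm_mul, mul_eq_one_comm.mp hQ, aclm_one]
lemma aclm_norm (Q : Matrix (Fin 3) (Fin 3) ℝ) (hQ : Q * Q.transpose = 1) (v : E3) :
    ‖aclm Q.transpose v‖ = ‖v‖ := by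
  have h : ⟪aclm Q.transpose v, aclm Q.transpose v⟫ = ⟪v, v⟫ := by
    rw [aclm_adj, aclm_inv1 Q hQ]
  rw [real_inner_self_eq_norm_sq, real_inner_self_eq_norm_sq] at h
  have := congrArg Real.sqrt h
  rwa [Real.sqrt_sq (norm_nonneg _), Real.sqrt_sq (norm_nonneg _)] at this
lemma fderiv_pre {F : Type*} [NormedAddCommGroup F] [NormedSpace ℝ F]
    (A : E3 →L[ℝ] E3) (f : E3 → F) (x : E3) (hf : DifferentiableAt ℝ f (A x)) :
    fderiv ℝ (fun y => f (A y)) x = (fderiv ℝ f (A x)).comp (A : E3 →L[ℝ] E3) := by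
  rw [show (fun y => f (A y)) = f ∘ A from rfl,
    fderiv_comp x hf A.differentiableAt, A.fderiv]
lemma fderiv_post {X : Type*} [NormedAddCommGroup X] [NormedSpace ℝ X]
    (B : E3 →L[ℝ] E3) (f : X → E3) (x : X) (hf : DifferentiableAt ℝ f x) :
    fderiv ℝ (fun y => B (f y)) x = B.comp (fderiv ℝ f x) :=
  ((B.hasFDerivAt).comp x hf.hasFDerivAt).fderiv
lemma deriv_post (B : E3 →L[ℝ] E3) (f : ℝ → E3) (t : ℝ) (hf : DifferentiableAt ℝ f t) :
    deriv (fun s => B (f s)) t = B (deriv f t) := by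
  have h : HasDerivAt (fun s => B (f s)) (B (deriv f t)) t :=
    HasFDerivAt.comp_hasDerivAt t (B.hasFDerivAt) hf.hasDerivAt
  exact h.deriv
lemma fderiv_apply_const (c : E3 → (E3 →L[ℝ] E3)) (x : E3) (hc : DifferentiableAt ℝ c x)
    (w : E3) : fderiv ℝ (fun y => c y w) x = (fderiv ℝ c x).flip w := by
  have := fderiv_clm_apply (𝕜 := ℝ) hc (differentiableAt_const w)
  simpa using this


/-- (Rotation symmetry of the tamed Navier–Stokes equation.)
If `Q` is a 3×3 orthogonal matrix (`Q·Qᵀ = 1`) and `(u, P)` is a classical solution with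
parameters `(ν, κ, N, U)`, then `ũ(t,x) := Qᵀ·u(t, Q·x)`, `P̃(t,x) := P(t, Q·x)` is a
classical solution with parameters `(ν, κ, N, Qᵀ·U)`. -/
theorem stmt7 (ν κ N : ℝ) (hν : 0 < ν) (hκ : 0 < κ) (hN : 0 ≤ N) (U : E3)
    (Q : Matrix (Fin 3) (Fin 3) ℝ) (hQ : Q * Q.transpose = 1)
    (u : ℝ → E3 → E3) (P : ℝ → E3 → ℝ)
    (h : IsTamedNSSolution ν κ N U u P) :
    IsTamedNSSolution ν κ N (Matrix.toEuclideanLin Q.transpose U)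
      (fun t x => Matrix.toEuclideanLin Q.transpose (u t (Matrix.toEuclideanLin Q x)))
      (fun t x => P t (Matrix.toEuclideanLin Q x)) := by
  obtain ⟨hu, hP, hbd, hpde, hdiv⟩ := h
  set A := aclm Q with hA
  set B := aclm Q.transpose with hB
  suffices h' : IsTamedNSSolution ν κ N (B U)
      (fun t x => B (u t (A x))) (fun t x => P t (A x)) by exact h'
  have hAB : ∀ v, A (B v) = v := aclm_inv1 Q hQ
  have hBA : ∀ v, B (A v) = v := aclm_inv2 Q hQ
  -- differentiability facts
  have hut : ∀ t, ContDiff ℝ 2 (u t) := fun t => hu.comp (contDiff_const.prodMk contDiff_id)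
  have hud : ∀ t, Differentiable ℝ (u t) := fun t => (hut t).differentiable (by norm_num)
  have hfd : ∀ t, ContDiff ℝ 1 (fderiv ℝ (u t)) := fun t =>
    (hut t).fderiv_right (by norm_num)
  have hfdd : ∀ t, Differentiable ℝ (fderiv ℝ (u t)) := fun t => (hfd t).differentiable (by norm_num)
  have hts : ∀ x, Differentiable ℝ (fun s => u s x) := fun x =>
    (hu.comp (contDiff_id.prodMk contDiff_const)).differentiable (by norm_num)
  have hPt : ∀ t, ContDiff ℝ 1 (P t) := fun t => hP.comp (contDiff_const.prodMk contDiff_id)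
  have hPd : ∀ t y, DifferentiableAt ℝ (P t) y := fun t y => (hPt t).differentiable (by norm_num) y
  -- key fderiv formula
  have hfder : ∀ t y w, fderiv ℝ (fun z => B (u t (A z))) y w
      = B (fderiv ℝ (u t) (A y) (A w)) := by
    intro t y w
    rw [fderiv_post B (fun z => u t (A z)) y ((hud t (A y)).comp y A.differentiableAt),
      fderiv_pre A (u t) y (hud t (A y))]
    rfl
  -- supSq
  have hsup : supSq (B U) (fun t x => B (u t (A x))) = supSq U u := by
    funext t
    unfold supSq
    have hsurj : Function.Surjective (fun x : E3 => A x) := fun v => ⟨B v, hAB v⟩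
    calc (⨆ x : E3, ‖B (u t (A x)) - B U‖ ^ 2)
        = ⨆ x : E3, ‖u t (A x) - U‖ ^ 2 := by
          refine iSup_congr fun x => ?_
          rw [← map_sub, hB, aclm_norm Q hQ]
      _ = ⨆ y : E3, ‖u t y - U‖ ^ 2 := hsurj.iSup_comp (fun y => ‖u t y - U‖ ^ 2)
  -- Laplacian
  have hlap : ∀ t x, lap3 (fun z => B (u t (A z))) x = B (lap3 (u t) (A x)) := by
    intro t x
    have hdc : DifferentiableAt ℝ (fderiv ℝ (u t)) (A x) := hfdd t (A x)
    set F2 := fderiv ℝ (fderiv ℝ (u t)) (A x) with hF2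
    have step : ∀ w : E3, fderiv ℝ (fun y => fderiv ℝ (fun z => B (u t (A z))) y w) x w
        = B (F2 (A w) (A w)) := by
      intro w
      have heq : (fun y => fderiv ℝ (fun z => B (u t (A z))) y w)
          = fun y => B ((fun z => fderiv ℝ (u t) z (A w)) (A y)) := by
        funext y; exact hfder t y w
      have hg : DifferentiableAt ℝ (fun z => fderiv ℝ (u t) z (A w)) (A x) :=
        hdc.clm_apply (differentiableAt_const _)
      rw [heq, fderiv_post B (fun y => fderiv ℝ (u t) (A y) (A w)) x ((hg.comp x A.differentiableAt)),
        fderiv_pre A (fun z => fderiv ℝ (u t) z (A w)) x hg]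
      simp only [ContinuousLinearMap.comp_apply, ContinuousLinearMap.coe_comp',
        Function.comp_apply]
      congr 1
      rw [fderiv_apply_const _ _ hdc]
      rfl
    unfold lap3
    rw [Finset.sum_congr rfl fun i _ => step (e3 i)]
    set T : E3 →ₗ[ℝ] E3 →ₗ[ℝ] E3 := LinearMap.mk₂ ℝ (fun v w => B (F2 v w))
      (fun a b w => by simp) (fun c a w => by simp)
      (fun a v w => by simp) (fun c a w => by simp) with hT
    have hr := rot_sum Q hQ T
    simp only [hT, LinearMap.mk₂_apply] at hr
    rw [hr]
    rw [← map_sum]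
    congr 1
    refine (Finset.sum_congr rfl fun i _ => ?_).symm
    rw [fderiv_apply_const _ _ hdc]
    rfl
  -- convection
  have hconv : ∀ t x, conv (B (u t (A x))) (fun z => B (u t (A z))) x
      = B (conv (u t (A x)) (u t) (A x)) := by
    intro t x
    unfold conv
    rw [hfder t x (B (u t (A x))), hAB]
  -- gradient
  have hgrad : ∀ t x, gradient (fun z => P t (A z)) x = B (gradient (P t) (A x)) := by
    intro t x
    have h1 : HasFDerivAt (P t)
        (InnerProductSpace.toDual ℝ E3 (gradient (P t) (A x))) (A x) :=
      hasGradientAt_iff_hasFDerivAt.mp (hPd t (A x)).hasGradientAt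
    have h2 : HasFDerivAt (fun z => P t (A z))
        ((InnerProductSpace.toDual ℝ E3 (gradient (P t) (A x))).comp (A : E3 →L[ℝ] E3)) x :=
      h1.comp x A.hasFDerivAt
    have h3 : (InnerProductSpace.toDual ℝ E3 (gradient (P t) (A x))).comp (A : E3 →L[ℝ] E3)
        = InnerProductSpace.toDual ℝ E3 (B (gradient (P t) (A x))) := by
      ext v
      simp only [ContinuousLinearMap.comp_apply, InnerProductSpace.toDual_apply_apply,
        ContinuousLinearMap.coe_comp', Function.comp_apply]
      exact (aclm_adj Q _ v).symm
    rw [h3] at h2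
    exact (hasGradientAt_iff_hasFDerivAt.mpr h2).gradient
  -- components via inner
  have hcompo : ∀ (w : E3) (i : Fin 3), w i = ⟪w, e3 i⟫ := by
    intro w i
    rw [e3, EuclideanSpace.inner_single_right]
    simp
  refine ⟨?_, ?_, ?_, ?_, ?_⟩
  · exact (B.contDiff.comp hu).comp (contDiff_fst.prodMk (A.contDiff.comp contDiff_snd))
  · exact hP.comp (contDiff_fst.prodMk (A.contDiff.comp contDiff_snd))
  · intro t
    obtain ⟨M, hM⟩ := hbd t
    exact ⟨M, fun x => by rw [← map_sub, hB, aclm_norm Q hQ]; exact hM (A x)⟩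
  · intro t x
    have hL : deriv (fun s => B (u s (A x))) t = B (deriv (fun s => u s (A x)) t) :=
      deriv_post B _ t ((hts (A x)) t)
    rw [hL, hpde t (A x), hsup]
    simp only [map_sub, map_add, map_smul]
    rw [hlap t x, hconv t x, hgrad t x]
  · intro t x
    have hstep : ∀ i, fderiv ℝ (fun z => B (u t (A z))) x (e3 i) i
        = ⟪fderiv ℝ (u t) (A x) (A (e3 i)), A (e3 i)⟫ := by
      intro i
      rw [hfder t x (e3 i), hcompo (B (fderiv ℝ (u t) (A x) (A (e3 i)))) i, hB, aclm_adj]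
    unfold div3
    rw [Finset.sum_congr rfl fun i _ => hstep i]
    set T : E3 →ₗ[ℝ] E3 →ₗ[ℝ] ℝ := LinearMap.mk₂ ℝ
      (fun v w => ⟪fderiv ℝ (u t) (A x) v, w⟫)
      (fun a b w => by simp only [map_add, inner_add_left])
      (fun c a w => by simp only [map_smul, real_inner_smul_left, smul_eq_mul])
      (fun a v w => inner_add_right _ _ _)
      (fun c a w => real_inner_smul_right _ _ _) with hT
    have hr := rot_sum Q hQ T
    simp only [hT, LinearMap.mk₂_apply] at hr
    rw [hr]
    have := hdiv t (A x)
    unfold div3 at this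
    rw [← this]
    exact Finset.sum_congr rfl fun i _ => by rw [← hcompo]

end
end

section
/- (Scale invariance of the tamed Navier–Stokes equation) Let ν, κ > 0, N ≥ 0, U ∈ ℝ³ a constant vector, and λ > 0. If (u, P) is a classical solution of the tamed Navier–Stokes equation with parameters (ν, κ, N, U), then the pair (ũ, P̃) defined by ũ(t,x) := λ·u(λ²·t, λ·x) and P̃(t,x) := λ²·P(λ²·t, λ·x) is a classical solution of the tamed Navier–Stokes equation with parameters (ν, κ, λ²·N, λ·U). -/
noncomputable section

open Set

section Aux
variable {F : Type*} [NormedAddCommGroup F] [NormedSpace ℝ F]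

lemma hasFDerivAt_smul_arg (lam : ℝ) {f : E3 → F} {D : E3 →L[ℝ] F} {x : E3}
    (hf : HasFDerivAt f D (lam • x)) :
    HasFDerivAt (fun y => f (lam • y)) (lam • D) x := by
  have hL : HasFDerivAt (fun y : E3 => lam • y)
      (lam • ContinuousLinearMap.id ℝ E3) x := (hasFDerivAt_id x).const_smul lam
  have h2 := hf.comp x hL
  have h3 : lam • D = D.comp (lam • ContinuousLinearMap.id ℝ E3) := by
    ext v
    simp
  rw [h3]
  exact h2

lemma hasDerivAt_sq_arg (lam : ℝ) {f : ℝ → F} {d : F} {t : ℝ}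
    (hf : HasDerivAt f d (lam ^ 2 * t)) :
    HasDerivAt (fun s => f (lam ^ 2 * s)) ((lam ^ 2) • d) t := by
  have h := hf.scomp t ((hasDerivAt_id t).const_mul (lam ^ 2))
  simp at h
  exact h

end Aux

/-- (Scale invariance of the tamed Navier–Stokes equation.)
If `(u, P)` is a classical solution with parameters `(ν, κ, N, U)` and `λ > 0`, then
`ũ(t,x) := λ·u(λ²t, λx)`, `P̃(t,x) := λ²·P(λ²t, λx)` is a classical solution with
parameters `(ν, κ, λ²N, λU)`. -/
theorem stmt8 (ν κ N : ℝ) (hν : 0 < ν) (hκ : 0 < κ) (hN : 0 ≤ N) (U : E3)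
    (lam : ℝ) (hlam : 0 < lam)
    (u : ℝ → E3 → E3) (P : ℝ → E3 → ℝ)
    (h : IsTamedNSSolution ν κ N U u P) :
    IsTamedNSSolution ν κ (lam ^ 2 * N) (lam • U)
      (fun t x => lam • u (lam ^ 2 * t) (lam • x))
      (fun t x => lam ^ 2 * P (lam ^ 2 * t) (lam • x)) := by
  obtain ⟨hu, hP, hbd, heq, hdiv⟩ := h
  -- basic regularity facts
  have huτ : ∀ τ : ℝ, ContDiff ℝ 2 (u τ) := fun τ =>
    hu.comp (contDiff_const.prodMk contDiff_id)
  have hut : ∀ y : E3, ContDiff ℝ 2 (fun s => u s y) := fun y =>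
    hu.comp (contDiff_id.prodMk contDiff_const)
  have hPτ : ∀ τ : ℝ, ContDiff ℝ 1 (P τ) := fun τ =>
    hP.comp (contDiff_const.prodMk contDiff_id)
  have hg : ∀ (τ : ℝ) (i : Fin 3),
      Differentiable ℝ (fun y => fderiv ℝ (u τ) y (e3 i)) := by
    intro τ i
    have h1 : ContDiff ℝ 1 (fun y => fderiv ℝ (u τ) y) :=
      (huτ τ).fderiv_right (by norm_num)
    exact fun y => ((ContinuousLinearMap.apply ℝ E3 (e3 i)).differentiable.comp
      (h1.differentiable one_ne_zero)) y
  -- scaling of first spatial derivatives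
  have hfd : ∀ (τ : ℝ) (y v : E3),
      fderiv ℝ (fun z => lam • u τ (lam • z)) y v
        = (lam ^ 2) • fderiv ℝ (u τ) (lam • y) v := by
    intro τ y v
    have hd : DifferentiableAt ℝ (u τ) (lam • y) :=
      ((huτ τ).differentiable (by norm_num)).differentiableAt
    have h1 : HasFDerivAt (fun z => u τ (lam • z))
        (lam • fderiv ℝ (u τ) (lam • y)) y := hasFDerivAt_smul_arg lam hd.hasFDerivAt
    have h2 := h1.const_smul lam
    rw [HasFDerivAt.fderiv (f := fun z => lam • u τ (lam • z)) h2]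
    simp [smul_smul, pow_two]
  -- scaling of the Laplacian
  have key_lap : ∀ (τ : ℝ) (y : E3),
      lap3 (fun z => lam • u τ (lam • z)) y = (lam ^ 3) • lap3 (u τ) (lam • y) := by
    intro τ y
    unfold lap3
    rw [Finset.smul_sum]
    refine Finset.sum_congr rfl fun i _ => ?_
    have hfun : (fun z => fderiv ℝ (fun w => lam • u τ (lam • w)) z (e3 i))
        = fun z => (lam ^ 2) • fderiv ℝ (u τ) (lam • z) (e3 i) :=
      funext fun z => hfd τ z (e3 i)
    rw [hfun]
    have hG := hasFDerivAt_smul_arg lam ((hg τ i (lam • y)).hasFDerivAt)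
    have hgz : DifferentiableAt ℝ (fun z => fderiv ℝ (u τ) (lam • z) (e3 i)) y :=
      hG.differentiableAt
    rw [fderiv_fun_const_smul hgz, hG.fderiv]
    simp [smul_smul]
    module
  -- scaling of divergence
  have key_div : ∀ (τ : ℝ) (y : E3),
      div3 (fun z => lam • u τ (lam • z)) y = lam ^ 2 * div3 (u τ) (lam • y) := by
    intro τ y
    unfold div3
    rw [Finset.mul_sum]
    refine Finset.sum_congr rfl fun i _ => ?_
    rw [hfd τ y (e3 i)]
    simp
  -- scaling of the pressure gradient
  have key_grad : ∀ (τ : ℝ) (y : E3),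
      gradient (fun z => lam ^ 2 * P τ (lam • z)) y
        = (lam ^ 3) • gradient (P τ) (lam • y) := by
    intro τ y
    have hd : DifferentiableAt ℝ (P τ) (lam • y) :=
      ((hPτ τ).differentiable one_ne_zero).differentiableAt
    have h1 : HasFDerivAt (fun z => P τ (lam • z))
        (lam • fderiv ℝ (P τ) (lam • y)) y := hasFDerivAt_smul_arg lam hd.hasFDerivAt
    have h2 := h1.const_mul (lam ^ 2)
    unfold gradient
    rw [h2.fderiv]
    rw [smul_smul, map_smul]
    congr 1 <;> ring
  -- scaling of the sup
  have key_sup : ∀ t : ℝ,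
      supSq (lam • U) (fun t x => lam • u (lam ^ 2 * t) (lam • x)) t
        = lam ^ 2 * supSq U u (lam ^ 2 * t) := by
    intro t
    unfold supSq
    have h1 : ∀ x : E3, ‖lam • u (lam ^ 2 * t) (lam • x) - lam • U‖ ^ 2
        = lam ^ 2 * ‖u (lam ^ 2 * t) (lam • x) - U‖ ^ 2 := by
      intro x
      rw [← smul_sub, norm_smul, Real.norm_eq_abs, abs_of_pos hlam]
      ring
    simp_rw [h1]
    rw [Real.mul_iSup_of_nonneg (by positivity)]
    have hsurj : Function.Surjective (fun x : E3 => lam • x) := fun y =>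
      ⟨lam⁻¹ • y, by simp [smul_smul, mul_inv_cancel₀ hlam.ne']⟩
    exact hsurj.iSup_comp (fun y => lam ^ 2 * ‖u (lam ^ 2 * t) y - U‖ ^ 2)
  -- scaling of the taming function
  have key_tam : ∀ S : ℝ,
      tamingFn ν κ (lam ^ 2 * N) (lam ^ 2 * S) = lam ^ 2 * tamingFn ν κ N S := by
    intro S
    unfold tamingFn
    rw [show lam ^ 2 * S - lam ^ 2 * N = lam ^ 2 * (S - N) by ring,
      show (0 : ℝ) = lam ^ 2 * 0 by ring, ← mul_max_of_nonneg _ _ (sq_nonneg lam)]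
    ring_nf
  refine ⟨?_, ?_, ?_, ?_, ?_⟩
  · -- C² of ũ
    have hφ : ContDiff ℝ 2 (fun p : ℝ × E3 => ((lam ^ 2 * p.1 : ℝ), (lam • p.2 : E3))) :=
      (contDiff_const.mul contDiff_fst).prodMk (contDiff_snd.const_smul lam)
    exact (hu.comp hφ).const_smul lam
  · -- C¹ of P̃
    have hφ : ContDiff ℝ 1 (fun p : ℝ × E3 => ((lam ^ 2 * p.1 : ℝ), (lam • p.2 : E3))) :=
      (contDiff_const.mul contDiff_fst).prodMk (contDiff_snd.const_smul lam)
    exact contDiff_const.mul (hP.comp hφ)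
  · -- boundedness
    intro t
    obtain ⟨M, hM⟩ := hbd (lam ^ 2 * t)
    refine ⟨lam * M, fun x => ?_⟩
    rw [← smul_sub, norm_smul, Real.norm_eq_abs, abs_of_pos hlam]
    exact mul_le_mul_of_nonneg_left (hM _) hlam.le
  · -- the PDE
    intro t x
    have hd0 : HasDerivAt (fun s => u s (lam • x))
        (deriv (fun s => u s (lam • x)) (lam ^ 2 * t)) (lam ^ 2 * t) :=
      (((hut (lam • x)).differentiable (by norm_num)) (lam ^ 2 * t)).hasDerivAt
    have hd1 := (hasDerivAt_sq_arg lam hd0).const_smul lam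
    rw [HasDerivAt.deriv (f := fun s => lam • u (lam ^ 2 * s) (lam • x)) hd1, heq (lam ^ 2 * t) (lam • x)]
    have hc : conv (lam • u (lam ^ 2 * t) (lam • x))
        (fun z => lam • u (lam ^ 2 * t) (lam • z)) x
        = (lam ^ 3) • conv (u (lam ^ 2 * t) (lam • x)) (u (lam ^ 2 * t)) (lam • x) := by
      unfold conv
      rw [hfd (lam ^ 2 * t) x (lam • u (lam ^ 2 * t) (lam • x)),
        (fderiv ℝ (u (lam ^ 2 * t)) (lam • x)).map_smul]
      rw [smul_smul]
      congr 1 <;> ring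
    rw [key_lap (lam ^ 2 * t) x, hc, key_grad (lam ^ 2 * t) x, key_sup t,
      key_tam (supSq U u (lam ^ 2 * t)), ← smul_sub lam (u (lam ^ 2 * t) (lam • x)) U]
    module
  · -- divergence free
    intro t x
    rw [key_div (lam ^ 2 * t) x, hdiv (lam ^ 2 * t) (lam • x), mul_zero]

end
end

section
/- (Vorticity equation for the tamed Navier–Stokes equation) Let ν, κ > 0, N ≥ 0, and U ∈ ℝ³ a constant vector. Let (u, P) be a classical solution of the tamed Navier–Stokes equation with parameters (ν, κ, N, U), with u of class C³ and P of class C². Define the vorticity ω : ℝ × ℝ³ → ℝ³ by ω = curl u, i.e. ω₁ = ∂₂u₃ − ∂₃u₂, ω₂ = ∂₃u₁ − ∂₁u₃, ω₃ = ∂₁u₂ − ∂₂u₁. Then for all (t,x) ∈ ℝ × ℝ³: ∂ₜω(t,x) = ν·Δω(t,x) + (ω(t,x)·∇)u(t,x) − (u(t,x)·∇)ω(t,x) − g^{ν,κ}_N(S(t))·ω(t,x), where S(t) = sup_{x ∈ ℝ³} |u(t,x) − U|². -/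
noncomputable section

open Set

/-- The curl `∇ ∧ f` of a vector field `f : ℝ³ → ℝ³` at `x` (0-indexed components):
`(curl f)₀ = ∂₁f₂ − ∂₂f₁`, `(curl f)₁ = ∂₂f₀ − ∂₀f₂`, `(curl f)₂ = ∂₀f₁ − ∂₁f₀`. -/
def curl3 (f : E3 → E3) (x : E3) : E3 :=
  (WithLp.equiv 2 (Fin 3 → ℝ)).symm
    ![fderiv ℝ f x (e3 1) 2 - fderiv ℝ f x (e3 2) 1,
      fderiv ℝ f x (e3 2) 0 - fderiv ℝ f x (e3 0) 2,
      fderiv ℝ f x (e3 0) 1 - fderiv ℝ f x (e3 1) 0]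

namespace S9
def pd (i : Fin 3) (f : E3 → ℝ) : E3 → ℝ := fun x => fderiv ℝ f x (e3 i)
def cmp (j : Fin 3) (f : E3 → E3) : E3 → ℝ := fun x => f x j

lemma cmp_eq (j : Fin 3) (f : E3 → E3) (x : E3) :
    cmp j f x = EuclideanSpace.proj (𝕜 := ℝ) j (f x) := rfl

lemma contDiff_cmp {n : WithTop ℕ∞} {f : E3 → E3} (hf : ContDiff ℝ n f) (j : Fin 3) :
    ContDiff ℝ n (cmp j f) :=
  (EuclideanSpace.proj (𝕜 := ℝ) j).contDiff.comp hf

lemma contDiff_pd {n : WithTop ℕ∞} {f : E3 → ℝ} (hf : ContDiff ℝ (n + 1) f) (i : Fin 3) :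
    ContDiff ℝ n (pd i f) :=
  (hf.fderiv_right le_rfl).clm_apply contDiff_const

lemma fderiv_cmp {f : E3 → E3} {x : E3} (hf : DifferentiableAt ℝ f x) (w : E3) (j : Fin 3) :
    fderiv ℝ f x w j = fderiv ℝ (cmp j f) x w := by
  have : fderiv ℝ (cmp j f) x = (EuclideanSpace.proj (𝕜 := ℝ) j).comp (fderiv ℝ f x) := by
    rw [show cmp j f = (EuclideanSpace.proj (𝕜 := ℝ) j) ∘ f from rfl]
    rw [fderiv_comp x (EuclideanSpace.proj (𝕜 := ℝ) j).differentiableAt hf,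
      ContinuousLinearMap.fderiv]
  rw [this]; rfl

lemma fderiv2_apply {f : E3 → ℝ} (hf : ContDiff ℝ 2 f) (x : E3) (i j : Fin 3) :
    pd i (pd j f) x = fderiv ℝ (fderiv ℝ f) x (e3 i) (e3 j) := by
  have hd : DifferentiableAt ℝ (fderiv ℝ f) x :=
    (hf.fderiv_right (m := 1) (by norm_num)).differentiable one_ne_zero x
  have : pd i (pd j f) x
      = ((fderiv ℝ f x).comp (fderiv ℝ (fun _ : E3 => e3 j) x)
          + (fderiv ℝ (fderiv ℝ f) x).flip (e3 j)) (e3 i) := by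
    show fderiv ℝ (fun y => fderiv ℝ f y (e3 j)) x (e3 i) = _
    rw [fderiv_clm_apply hd (differentiableAt_const _)]
  simpa using this

lemma clairaut {f : E3 → ℝ} (hf : ContDiff ℝ 2 f) (i j : Fin 3) (x : E3) :
    pd i (pd j f) x = pd j (pd i f) x := by
  rw [fderiv2_apply hf x i j, fderiv2_apply hf x j i]
  exact (hf.contDiffAt.isSymmSndFDerivAt (by simp)) (e3 i) (e3 j)

lemma e3_sum (w : E3) : ∑ i : Fin 3, w i • e3 i = w := by
  apply PiLp.ext
  intro j
  simp [e3, Fin.sum_univ_three, EuclideanSpace.single_apply]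
  fin_cases j <;> simp

lemma fderiv_expand {f : E3 → ℝ} {x : E3} (w : E3) :
    fderiv ℝ f x w = ∑ i : Fin 3, w i * pd i f x := by
  conv_lhs => rw [← e3_sum w]
  rw [map_sum]
  simp [pd]

end S9



namespace S9

/-- curl index pairs: component j of curl f is pd (cb j) (cmp (cc j) f) - pd (cc j) (cmp (cb j) f) -/
def cb : Fin 3 → Fin 3 := ![1, 2, 0]
def cc : Fin 3 → Fin 3 := ![2, 0, 1]

lemma curl3_apply {f : E3 → E3} {x : E3} (hf : DifferentiableAt ℝ f x) (j : Fin 3) :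
    curl3 f x j = pd (cb j) (cmp (cc j) f) x - pd (cc j) (cmp (cb j) f) x := by
  rw [curl3, WithLp.equiv_symm_apply, PiLp.toLp_apply]
  fin_cases j
  · exact congrArg₂ (· - ·) (fderiv_cmp hf (e3 1) 2) (fderiv_cmp hf (e3 2) 1)
  · exact congrArg₂ (· - ·) (fderiv_cmp hf (e3 2) 0) (fderiv_cmp hf (e3 0) 2)
  · exact congrArg₂ (· - ·) (fderiv_cmp hf (e3 0) 1) (fderiv_cmp hf (e3 1) 0)

lemma conv_apply {v : E3} {f : E3 → E3} {x : E3} (hf : DifferentiableAt ℝ f x) (j : Fin 3) :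
    conv v f x j = ∑ i : Fin 3, v i * pd i (cmp j f) x := by
  rw [conv, fderiv_cmp hf, fderiv_expand]

lemma div3_eq {f : E3 → E3} {x : E3} (hf : DifferentiableAt ℝ f x) :
    div3 f x = ∑ i : Fin 3, pd i (cmp i f) x := by
  rw [div3]
  exact Finset.sum_congr rfl fun i _ => fderiv_cmp hf (e3 i) i

lemma lap3_apply {f : E3 → E3} (hf : ContDiff ℝ 2 f) (x : E3) (j : Fin 3) :
    lap3 f x j = ∑ i : Fin 3, pd i (pd i (cmp j f)) x := by
  have hf1 : ∀ i : Fin 3, ContDiff ℝ 1 fun y => fderiv ℝ f y (e3 i) :=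
    fun i => (hf.fderiv_right (by norm_num)).clm_apply contDiff_const
  rw [lap3]
  rw [show ((∑ i : Fin 3, fderiv ℝ (fun y => fderiv ℝ f y (e3 i)) x (e3 i)) j)
      = ∑ i : Fin 3, (fderiv ℝ (fun y => fderiv ℝ f y (e3 i)) x (e3 i)) j from by
    simp [Fin.sum_univ_three]]
  refine Finset.sum_congr rfl fun i _ => ?_
  rw [fderiv_cmp ((hf1 i).differentiable one_ne_zero x) (e3 i) j]
  have : cmp j (fun y => fderiv ℝ f y (e3 i)) = pd i (cmp j f) := by
    funext y
    exact fderiv_cmp (hf.differentiable (by norm_num) y) (e3 i) j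
  rw [show pd i (pd i (cmp j f)) x = fderiv ℝ (pd i (cmp j f)) x (e3 i) from rfl, this]

lemma gradient_apply {p : E3 → ℝ} (x : E3) (j : Fin 3) :
    gradient p x j = pd j p x := by
  have h1 : gradient p x j = inner (𝕜 := ℝ) (gradient p x) (e3 j) := by
    rw [e3, EuclideanSpace.inner_single_right]; simp
  rw [h1, show gradient p x = (InnerProductSpace.toDual ℝ _).symm (fderiv ℝ p x) from rfl,
    InnerProductSpace.toDual_symm_apply]
  rfl

lemma smul_apply' (c : ℝ) (v : E3) (j : Fin 3) : (c • v) j = c * v j := rfl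
lemma sub_apply' (v w : E3) (j : Fin 3) : (v - w) j = v j - w j := rfl
lemma add_apply' (v w : E3) (j : Fin 3) : (v + w) j = v j + w j := rfl

end S9

namespace S9

lemma cle_symm_apply (v : Fin 3 → ℝ) (j : Fin 3) :
    (PiLp.continuousLinearEquiv 2 ℝ (fun _ : Fin 3 => ℝ)).symm v j = v j := rfl

lemma time_comm (u : ℝ → E3 → E3)
    (hu3 : ContDiff ℝ 3 (fun p : ℝ × E3 => u p.1 p.2)) (t : ℝ) (x : E3) :
    deriv (fun s => curl3 (u s) x) t
      = curl3 (fun y => deriv (fun s => u s y) t) x := by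
  set F : ℝ × E3 → E3 := fun p => u p.1 p.2 with hF
  set G : ℝ × E3 → (ℝ × E3) →L[ℝ] E3 := fderiv ℝ F with hG
  have hGc : ContDiff ℝ 2 G := hu3.fderiv_right (by norm_num)
  have hFd : Differentiable ℝ F := hu3.differentiable (by norm_num)
  have hGd : Differentiable ℝ G := hGc.differentiable (by norm_num)
  have hi : ∀ (s : ℝ) (y : E3) (w : E3),
      fderiv ℝ (u s) y w = G (s, y) (0, w) := by
    intro s y w
    have h1 : HasFDerivAt (u s) ((G (s, y)).comp (ContinuousLinearMap.inr ℝ ℝ E3)) y :=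
      (hFd (s, y)).hasFDerivAt.comp y (hasFDerivAt_prodMk_right s y)
    rw [h1.fderiv]; rfl
  have hii : ∀ (y : E3), HasDerivAt (fun s => u s y) (G (t, y) (1, 0)) t := by
    intro y
    have h2 : HasDerivAt (fun s : ℝ => (s, y)) ((1 : ℝ), (0 : E3)) t :=
      (hasDerivAt_id t).prodMk (hasDerivAt_const t y)
    exact (hFd (t, y)).hasFDerivAt.comp_hasDerivAt t h2
  set W : E3 → E3 := fun y => G (t, y) (1, 0) with hW
  have hWeq : (fun y => deriv (fun s => u s y) t) = W := funext fun y => (hii y).deriv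
  have hiii : HasDerivAt (fun s => G (s, x)) (fderiv ℝ G (t, x) (1, 0)) t := by
    have h2 : HasDerivAt (fun s : ℝ => (s, x)) ((1 : ℝ), (0 : E3)) t :=
      (hasDerivAt_id t).prodMk (hasDerivAt_const t x)
    exact (hGd (t, x)).hasFDerivAt.comp_hasDerivAt t h2
  set H := fderiv ℝ G (t, x) (1, 0) with hH
  have hsymm : ∀ w : ℝ × E3, H w = fderiv ℝ G (t, x) w (1, 0) :=
    fun w => (hu3.contDiffAt.isSymmSndFDerivAt (by norm_num)) _ _
  have hWF : ∀ w : E3, fderiv ℝ W x w = fderiv ℝ G (t, x) (0, w) (1, 0) := by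
    intro w
    have h2 : HasFDerivAt (fun y : E3 => G (t, y))
        ((fderiv ℝ G (t, x)).comp (ContinuousLinearMap.inr ℝ ℝ E3)) x :=
      ((hGd (t, x)).hasFDerivAt).comp x (hasFDerivAt_prodMk_right t x)
    have h3 : HasFDerivAt W
        ((ContinuousLinearMap.apply ℝ E3 ((1:ℝ), (0:E3))).comp
          ((fderiv ℝ G (t, x)).comp (ContinuousLinearMap.inr ℝ ℝ E3))) x :=
      (ContinuousLinearMap.apply ℝ E3 ((1:ℝ), (0:E3))).hasFDerivAt.comp x h2
    rw [h3.fderiv]; rfl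
  -- scalar components
  have hb : ∀ (p q : Fin 3), HasDerivAt (fun s => G (s, x) (0, e3 p) q) (H (0, e3 p) q) t := by
    intro p q
    have h4 : HasDerivAt (fun s => G (s, x) ((0 : ℝ), e3 p)) (H ((0 : ℝ), e3 p)) t := by
      have := (ContinuousLinearMap.apply ℝ E3 ((0:ℝ), e3 p)).hasFDerivAt.comp_hasDerivAt t hiii
      exact this
    have := (EuclideanSpace.proj (𝕜 := ℝ) q).hasFDerivAt.comp_hasDerivAt t h4
    exact this
  have hcurl : ∀ s, curl3 (u s) x = (PiLp.continuousLinearEquiv 2 ℝ (fun _ : Fin 3 => ℝ)).symm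
      ![G (s, x) (0, e3 1) 2 - G (s, x) (0, e3 2) 1,
        G (s, x) (0, e3 2) 0 - G (s, x) (0, e3 0) 2,
        G (s, x) (0, e3 0) 1 - G (s, x) (0, e3 1) 0] := by
    intro s
    rw [curl3]
    simp only [hi]
    rfl
  have hvec : HasDerivAt (fun s => curl3 (u s) x)
      ((PiLp.continuousLinearEquiv 2 ℝ (fun _ : Fin 3 => ℝ)).symm
        ![H (0, e3 1) 2 - H (0, e3 2) 1,
          H (0, e3 2) 0 - H (0, e3 0) 2,
          H (0, e3 0) 1 - H (0, e3 1) 0]) t := by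
    have hpi : HasDerivAt (fun s => ![G (s, x) (0, e3 1) 2 - G (s, x) (0, e3 2) 1,
        G (s, x) (0, e3 2) 0 - G (s, x) (0, e3 0) 2,
        G (s, x) (0, e3 0) 1 - G (s, x) (0, e3 1) 0] : ℝ → (Fin 3 → ℝ))
        ![H (0, e3 1) 2 - H (0, e3 2) 1,
          H (0, e3 2) 0 - H (0, e3 0) 2,
          H (0, e3 0) 1 - H (0, e3 1) 0] t := by
      rw [hasDerivAt_pi]
      intro i
      fin_cases i
      · simpa [Pi.sub_def] using (hb 1 2).sub (hb 2 1)
      · simpa [Pi.sub_def] using (hb 2 0).sub (hb 0 2)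
      · simpa [Pi.sub_def] using (hb 0 1).sub (hb 1 0)
    have h5 := ((PiLp.continuousLinearEquiv 2 ℝ (fun _ : Fin 3 => ℝ)).symm :
        (Fin 3 → ℝ) →L[ℝ] E3).hasFDerivAt.comp_hasDerivAt t hpi
    simp only [Function.comp] at h5
    have hfun : (fun s => curl3 (u s) x)
        = fun s => (PiLp.continuousLinearEquiv 2 ℝ (fun _ : Fin 3 => ℝ)).symm
          ![G (s, x) (0, e3 1) 2 - G (s, x) (0, e3 2) 1,
            G (s, x) (0, e3 2) 0 - G (s, x) (0, e3 0) 2,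
            G (s, x) (0, e3 0) 1 - G (s, x) (0, e3 1) 0] := funext hcurl
    rw [hfun]
    exact h5
  rw [hvec.deriv, hWeq, curl3]
  have he : ∀ (p q : Fin 3), H (0, e3 p) q = fderiv ℝ W x (e3 p) q := by
    intro p q
    rw [hWF, hsymm]
  apply PiLp.ext
  intro j
  fin_cases j <;>
    simp [cle_symm_apply, WithLp.equiv_symm_apply, PiLp.toLp_apply, he]

lemma contDiff_pd' {m n : WithTop ℕ∞} {f : E3 → ℝ} (hf : ContDiff ℝ m f)
    (h : n + 1 ≤ m) (i : Fin 3) : ContDiff ℝ n (pd i f) :=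
  (hf.fderiv_right h).clm_apply contDiff_const

lemma pd_add {f g : E3 → ℝ} {x : E3} (hf : DifferentiableAt ℝ f x)
    (hg : DifferentiableAt ℝ g x) (i : Fin 3) :
    pd i (fun y => f y + g y) x = pd i f x + pd i g x := by
  show fderiv ℝ _ x (e3 i) = _
  rw [fderiv_fun_add hf hg]; rfl

lemma pd_sub {f g : E3 → ℝ} {x : E3} (hf : DifferentiableAt ℝ f x)
    (hg : DifferentiableAt ℝ g x) (i : Fin 3) :
    pd i (fun y => f y - g y) x = pd i f x - pd i g x := by
  show fderiv ℝ _ x (e3 i) = _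
  rw [fderiv_fun_sub hf hg]; rfl

lemma pd_mul {f g : E3 → ℝ} {x : E3} (hf : DifferentiableAt ℝ f x)
    (hg : DifferentiableAt ℝ g x) (i : Fin 3) :
    pd i (fun y => f y * g y) x = f x * pd i g x + g x * pd i f x := by
  show fderiv ℝ _ x (e3 i) = _
  rw [fderiv_fun_mul hf hg]; rfl

lemma pd_const_mul {f : E3 → ℝ} {x : E3} (hf : DifferentiableAt ℝ f x) (c : ℝ) (i : Fin 3) :
    pd i (fun y => c * f y) x = c * pd i f x := by
  show fderiv ℝ _ x (e3 i) = _
  rw [fderiv_const_mul hf c]; rfl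

lemma pd_sub_const {f : E3 → ℝ} {x : E3} (k : ℝ) (i : Fin 3) :
    pd i (fun y => f y - k) x = pd i f x := by
  show fderiv ℝ _ x (e3 i) = _
  rw [fderiv_sub_const]; rfl

lemma pd_sum {A : Fin 3 → E3 → ℝ} {x : E3} (hA : ∀ i, DifferentiableAt ℝ (A i) x) (b : Fin 3) :
    pd b (fun y => ∑ i : Fin 3, A i y) x = ∑ i : Fin 3, pd b (A i) x := by
  show fderiv ℝ _ x (e3 b) = _
  rw [fderiv_fun_sum fun i _ => hA i]; rfl

lemma pd_sub_fun {f g : E3 → ℝ} (hf : Differentiable ℝ f) (hg : Differentiable ℝ g) (i : Fin 3) :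
    pd i (fun y => f y - g y) = fun x => pd i f x - pd i g x :=
  funext fun x => pd_sub (hf x) (hg x) i

lemma clairaut3 {w : E3 → ℝ} (hw : ContDiff ℝ 3 w) (a i : Fin 3) (x : E3) :
    pd a (pd i (pd i w)) x = pd i (pd i (pd a w)) x := by
  have h1 : pd a (pd i (pd i w)) x = pd i (pd a (pd i w)) x :=
    clairaut (contDiff_pd' hw (by norm_num) i) a i x
  have h2 : pd a (pd i w) = pd i (pd a w) :=
    funext fun y => clairaut (hw.of_le (by norm_num)) a i y
  rw [h1, h2]

end S9

namespace S9

lemma cb0 : cb 0 = 1 := rfl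
lemma cb1 : cb 1 = 2 := rfl
lemma cb2 : cb 2 = 0 := rfl
lemma cc0 : cc 0 = 2 := rfl
lemma cc1 : cc 1 = 0 := rfl
lemma cc2 : cc 2 = 1 := rfl

lemma spatial (ν c : ℝ) (U : E3) {v : E3 → E3} (hv : ContDiff ℝ 3 v)
    {p : E3 → ℝ} (hp : ContDiff ℝ 2 p) (hdiv : ∀ y, div3 v y = 0) (x : E3) :
    curl3 (fun y => ν • lap3 v y - conv (v y) v y + gradient p y - c • (v y - U)) x
      = ν • lap3 (curl3 v) x + conv (curl3 v x) v x - conv (v x) (curl3 v) x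
        - c • curl3 v x := by
  have hv2 : ContDiff ℝ 2 v := hv.of_le (by norm_num)
  have hv1 : Differentiable ℝ v := hv.differentiable (by norm_num)
  have hc3 : ∀ q, ContDiff ℝ 3 (cmp q v) := fun q => contDiff_cmp hv q
  have hd2 : ∀ i q, ContDiff ℝ 2 (pd i (cmp q v)) :=
    fun i q => contDiff_pd' (hc3 q) (by norm_num) i
  have hdd1 : ∀ k i q, ContDiff ℝ 1 (pd k (pd i (cmp q v))) :=
    fun k i q => contDiff_pd' (hd2 i q) (by norm_num) k
  have hgp1 : ∀ q, ContDiff ℝ 1 (pd q p) := fun q => contDiff_pd' hp (by norm_num) q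
  -- vector-field smoothness
  have hlap : ContDiff ℝ 1 (fun y => lap3 v y) := by
    apply ContDiff.sum
    intro i _
    have h1 : ContDiff ℝ 2 (fun z => fderiv ℝ v z (e3 i)) :=
      (hv.fderiv_right (n := 3) (m := 2) (by norm_num)).clm_apply contDiff_const
    exact (h1.fderiv_right (n := 2) (m := 1) (by norm_num)).clm_apply contDiff_const
  have hconv : ContDiff ℝ 1 (fun y => conv (v y) v y) := by
    exact ((hv.fderiv_right (n := 3) (m := 2) (by norm_num)).clm_apply
      (hv.of_le (by norm_num))).of_le (by norm_num)
  have hgradp : ContDiff ℝ 1 (fun y => gradient p y) := by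
    apply contDiff_euclidean.2
    intro j
    have h : (fun y => gradient p y j) = pd j p := funext fun y => gradient_apply y j
    rw [h]; exact hgp1 j
  have hlast : ContDiff ℝ 1 (fun y => c • (v y - U)) :=
    ((hv.of_le (by norm_num)).sub contDiff_const).const_smul c
  have hΦ : Differentiable ℝ
      (fun y => ν • lap3 v y - conv (v y) v y + gradient p y - c • (v y - U)) :=
    ((((hlap.const_smul ν).sub hconv).add hgradp).sub hlast).differentiable one_ne_zero
  -- curl of v
  have hωcmp : ∀ j, cmp j (curl3 v)
      = fun y => pd (cb j) (cmp (cc j) v) y - pd (cc j) (cmp (cb j) v) y :=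
    fun j => funext fun y => curl3_apply (hv1 y) j
  have hω2 : ContDiff ℝ 2 (curl3 v) := by
    apply contDiff_euclidean.2
    intro j
    have h : (fun y => curl3 v y j) = fun y => pd (cb j) (cmp (cc j) v) y
        - pd (cc j) (cmp (cb j) v) y := hωcmp j
    rw [h]
    exact ((hd2 _ _).of_le (by norm_num)).sub ((hd2 _ _).of_le (by norm_num))
  -- components of Φ
  have hcmpΦ : ∀ q : Fin 3, cmp q
      (fun y => ν • lap3 v y - conv (v y) v y + gradient p y - c • (v y - U))
      = fun y => ν * (∑ i : Fin 3, pd i (pd i (cmp q v)) y)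
        - (∑ i : Fin 3, v y i * pd i (cmp q v) y)
        + pd q p y
        - c * (v y q - U q) := by
    intro q
    funext y
    show (ν • lap3 v y - conv (v y) v y + gradient p y - c • (v y - U)) q = _
    rw [sub_apply', add_apply', sub_apply', smul_apply', smul_apply', sub_apply',
      lap3_apply hv2 y q, conv_apply (hv1 y) q, gradient_apply]
  -- differentiability of scalar pieces
  have hS1 : ∀ q, Differentiable ℝ (fun y => ∑ i : Fin 3, pd i (pd i (cmp q v)) y) :=
    fun q => Differentiable.fun_sum fun i _ => (hdd1 i i q).differentiable one_ne_zero
  have hS2 : ∀ q, Differentiable ℝ (fun y => ∑ i : Fin 3, v y i * pd i (cmp q v) y) :=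
    fun q => Differentiable.fun_sum fun i _ =>
      (((hc3 i).differentiable (by norm_num)).mul ((hd2 i q).differentiable (by norm_num)))
  -- pd of components of Φ
  have hpdΦ : ∀ b q : Fin 3,
      pd b (cmp q (fun y => ν • lap3 v y - conv (v y) v y + gradient p y - c • (v y - U))) x
      = ν * (∑ i : Fin 3, pd b (pd i (pd i (cmp q v))) x)
        - (∑ i : Fin 3, (v x i * pd b (pd i (cmp q v)) x + pd i (cmp q v) x * pd b (cmp i v) x))
        + pd b (pd q p) x
        - c * pd b (cmp q v) x := by
    intro b q
    rw [hcmpΦ q]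
    have d1 : DifferentiableAt ℝ (fun y => ν * (∑ i : Fin 3, pd i (pd i (cmp q v)) y)) x :=
      ((hS1 q) x).const_mul ν
    have d2 : DifferentiableAt ℝ (fun y => ∑ i : Fin 3, v y i * pd i (cmp q v) y) x := (hS2 q) x
    have d3 : DifferentiableAt ℝ (pd q p) x := ((hgp1 q).differentiable one_ne_zero) x
    have d4' : DifferentiableAt ℝ (fun y => v y q - U q) x :=
      (((hc3 q).differentiable (by norm_num)) x).sub_const (U q)
    have d4 : DifferentiableAt ℝ (fun y => c * (v y q - U q)) x := d4'.const_mul c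
    have dvi : ∀ i : Fin 3, DifferentiableAt ℝ (fun y => v y i) x :=
      fun i => ((hc3 i).differentiable (by norm_num)) x
    rw [pd_sub ((d1.fun_sub d2).fun_add d3) d4, pd_add (d1.fun_sub d2) d3, pd_sub d1 d2,
      pd_const_mul (hS1 q x) ν, pd_sum (fun i => (hdd1 i i q).differentiable one_ne_zero x) b,
      pd_const_mul d4' c,
      pd_sub_const, pd_sum (fun i => (dvi i).fun_mul
        ((hd2 i q).differentiable (by norm_num) x)) b]
    congr 1
    congr 1
    congr 1
    exact Finset.sum_congr rfl fun i _ =>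
      pd_mul (dvi i) ((hd2 i q).differentiable (by norm_num) x) b
  -- symmetry and divergence facts
  have HD : pd 0 (cmp 0 v) x + pd 1 (cmp 1 v) x + pd 2 (cmp 2 v) x = 0 := by
    have h := hdiv x
    rw [div3_eq (hv1 x)] at h
    simpa [Fin.sum_univ_three] using h
  have H2 : ∀ a b q : Fin 3, pd a (pd b (cmp q v)) x = pd b (pd a (cmp q v)) x :=
    fun a b q => clairaut ((hc3 q).of_le (by norm_num)) a b x
  have H3 : ∀ a i q : Fin 3, pd a (pd i (pd i (cmp q v))) x
      = pd i (pd i (pd a (cmp q v))) x :=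
    fun a i q => clairaut3 (hc3 q) a i x
  have HP : ∀ a b : Fin 3, pd a (pd b p) x = pd b (pd a p) x :=
    fun a b => clairaut hp a b x
  have hωval : ∀ i : Fin 3, curl3 v x i
      = pd (cb i) (cmp (cc i) v) x - pd (cc i) (cmp (cb i) v) x :=
    fun i => curl3_apply (hv1 x) i
  have hsplit : ∀ (i : Fin 3) (a b : Fin 3),
      pd i (fun y => pd a (cmp b v) y - pd b (cmp a v) y)
        = fun z => pd i (pd a (cmp b v)) z - pd i (pd b (cmp a v)) z :=
    fun i a b => funext fun z =>
      pd_sub ((hd2 a b).differentiable (by norm_num) z)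
        ((hd2 b a).differentiable (by norm_num) z) i
  have hsplit2 : ∀ (i : Fin 3) (a b : Fin 3),
      pd i (fun z => pd i (pd a (cmp b v)) z - pd i (pd b (cmp a v)) z) x
        = pd i (pd i (pd a (cmp b v))) x - pd i (pd i (pd b (cmp a v))) x :=
    fun i a b =>
      pd_sub ((hdd1 i a b).differentiable one_ne_zero x)
        ((hdd1 i b a).differentiable one_ne_zero x) i
  apply PiLp.ext
  intro j
  rw [curl3_apply (hΦ x) j, hpdΦ (cb j) (cc j), hpdΦ (cc j) (cb j)]
  simp only [sub_apply', add_apply', smul_apply']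
  rw [lap3_apply hω2 x j, conv_apply (hv1 x) j,
    conv_apply ((hω2.differentiable (by norm_num)) x) j]
  simp only [hωcmp, hωval, hsplit, hsplit2]
  fin_cases j <;>
    simp only [Fin.zero_eta, Fin.mk_one, Fin.reduceFinMk, Fin.isValue,
      cb0, cb1, cb2, cc0, cc1, cc2, Fin.sum_univ_three]
  · linear_combination (HP 1 2) - (pd 1 (cmp 2 v) x - pd 2 (cmp 1 v) x) * HD
      + ν * (H3 1 0 2 + H3 1 1 2 + H3 1 2 2) - ν * (H3 2 0 1 + H3 2 1 1 + H3 2 2 1)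
      - v x 0 * H2 1 0 2 - v x 1 * H2 1 1 2 - v x 2 * H2 1 2 2
      + v x 0 * H2 2 0 1 + v x 1 * H2 2 1 1 + v x 2 * H2 2 2 1
  · linear_combination (HP 2 0) - (pd 2 (cmp 0 v) x - pd 0 (cmp 2 v) x) * HD
      + ν * (H3 2 0 0 + H3 2 1 0 + H3 2 2 0) - ν * (H3 0 0 2 + H3 0 1 2 + H3 0 2 2)
      - v x 0 * H2 2 0 0 - v x 1 * H2 2 1 0 - v x 2 * H2 2 2 0
      + v x 0 * H2 0 0 2 + v x 1 * H2 0 1 2 + v x 2 * H2 0 2 2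
  · linear_combination (HP 0 1) - (pd 0 (cmp 1 v) x - pd 1 (cmp 0 v) x) * HD
      + ν * (H3 0 0 1 + H3 0 1 1 + H3 0 2 1) - ν * (H3 1 0 0 + H3 1 1 0 + H3 1 2 0)
      - v x 0 * H2 0 0 1 - v x 1 * H2 0 1 1 - v x 2 * H2 0 2 1
      + v x 0 * H2 1 0 0 + v x 1 * H2 1 1 0 + v x 2 * H2 1 2 0


end S9

/-- (Vorticity equation for the tamed Navier–Stokes equation.)
If `(u, P)` is a classical solution with parameters `(ν, κ, N, U)`, with `u` of class `C³`
and `P` of class `C²`, then the vorticity `ω = curl u` satisfies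
`∂ₜω = ν Δω + (ω·∇)u − (u·∇)ω − g^{ν,κ}_N(S(t))·ω`. -/
theorem stmt9 (ν κ N : ℝ) (hν : 0 < ν) (hκ : 0 < κ) (hN : 0 ≤ N) (U : E3)
    (u : ℝ → E3 → E3) (P : ℝ → E3 → ℝ)
    (h : IsTamedNSSolution ν κ N U u P)
    (hu3 : ContDiff ℝ 3 (fun p : ℝ × E3 => u p.1 p.2))
    (hP2 : ContDiff ℝ 2 (fun p : ℝ × E3 => P p.1 p.2))
    (ω : ℝ → E3 → E3) (hω : ∀ t x, ω t x = curl3 (u t) x) :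
    ∀ (t : ℝ) (x : E3),
      deriv (fun s => ω s x) t =
        ν • lap3 (ω t) x + conv (ω t x) (u t) x - conv (u t x) (ω t) x
          - tamingFn ν κ N (supSq U u t) • ω t x := by
  intro t x
  obtain ⟨hu2, hP1, hbd, hpde, hdiv0⟩ := h
  have hins : ContDiff ℝ 3 (fun y : E3 => (t, y)) := contDiff_const.prodMk contDiff_id
  have hv : ContDiff ℝ 3 (u t) := hu3.comp hins
  have hp : ContDiff ℝ 2 (P t) := hP2.comp (contDiff_const.prodMk contDiff_id)
  have hωfun : ω t = curl3 (u t) := funext fun y => hω t y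
  have h1 : (fun s => ω s x) = fun s => curl3 (u s) x := funext fun s => hω s x
  rw [h1, S9.time_comm u hu3 t x]
  have h2 : (fun y => deriv (fun s => u s y) t)
      = fun y => ν • lap3 (u t) y - conv (u t y) (u t) y + gradient (P t) y
          - tamingFn ν κ N (supSq U u t) • (u t y - U) := funext fun y => hpde t y
  rw [h2, S9.spatial ν (tamingFn ν κ N (supSq U u t)) U hv hp (hdiv0 t) x, hωfun]

end
end

section
/- Let v, u : ℝ³ → ℝ³ be continuously differentiable, with u compactly supported, and suppose div v(x) = 0 for all x ∈ ℝ³. Then ∫_{ℝ³} ⟨(v(x)·∇)u(x), u(x)⟩ dx = 0. -/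
open MeasureTheory

/-- Integral of a directional derivative of a C¹ compactly supported scalar function is zero. -/
lemma integral_fderiv_eq_zero_aux {E : Type*} [NormedAddCommGroup E] [NormedSpace ℝ E]
    [MeasurableSpace E] [BorelSpace E] [FiniteDimensional ℝ E]
    (μ : Measure E) [μ.IsAddHaarMeasure]
    (F : E → ℝ) (hF : ContDiff ℝ 1 F) (hFc : HasCompactSupport F) (w : E) :
    ∫ x, fderiv ℝ F x w ∂μ = 0 := by
  obtain ⟨D, hD⟩ := hF.lipschitzWith_of_hasCompactSupport hFc one_ne_zero
  have h1 : LipschitzWith 0 (fun _ : E => (1 : ℝ)) := LipschitzWith.const 1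
  have key := LipschitzWith.integral_lineDeriv_mul_eq (μ := μ) h1 hD hFc (-w)
  have hz : ∀ x : E, lineDeriv ℝ (fun _ : E => (1 : ℝ)) x (-w) = 0 := fun x => by
    rw [(differentiableAt_const (1 : ℝ)).lineDeriv_eq_fderiv]; simp
  simp only [hz, zero_mul, integral_zero, neg_neg, mul_one] at key
  rw [show (fun x => fderiv ℝ F x w) = fun x => lineDeriv ℝ F x w from
    funext fun x => (((hF.differentiable one_ne_zero) x).lineDeriv_eq_fderiv).symm, ← key]

/-- Let `v, u : ℝ³ → ℝ³` be `C¹`, with `u` compactly supported, and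
`div v = 0`. Then `∫_{ℝ³} ⟨(v·∇)u, u⟩ dx = 0`, where `(v·∇)u` at `x` is the Fréchet
derivative of `u` at `x` applied to `v(x)` and `div v = ∑ᵢ ∂ᵢvᵢ`. -/
theorem stmt12 (v u : EuclideanSpace ℝ (Fin 3) → EuclideanSpace ℝ (Fin 3))
    (hv : ContDiff ℝ 1 v) (hu : ContDiff ℝ 1 u) (hcs : HasCompactSupport u)
    (hdiv : ∀ x, ∑ i : Fin 3, fderiv ℝ v x (EuclideanSpace.single i 1) i = 0) :
    ∫ x, (inner ℝ (fderiv ℝ u x (v x)) (u x) : ℝ) ∂volume = 0 := by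
  have hud : ∀ x, DifferentiableAt ℝ u x := fun x => (hu.differentiable one_ne_zero) x
  have hvd : ∀ x, DifferentiableAt ℝ v x := fun x => (hv.differentiable one_ne_zero) x
  set g : EuclideanSpace ℝ (Fin 3) → ℝ := fun x => (inner ℝ (u x) (u x) : ℝ) with hgdef
  have hg : ContDiff ℝ 1 g := hu.inner ℝ hu
  have hgc : HasCompactSupport g :=
    hcs.comp_left (g := fun y : EuclideanSpace ℝ (Fin 3) => (inner ℝ y y : ℝ)) (by simp)
  have hgd : ∀ x w, fderiv ℝ g x w = 2 * (inner ℝ (fderiv ℝ u x w) (u x) : ℝ) := by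
    intro x w
    have h := ((hud x).hasFDerivAt.inner ℝ (hud x).hasFDerivAt).fderiv
    rw [hgdef, h]
    simp only [ContinuousLinearMap.comp_apply, fderivInnerCLM_apply,
      ContinuousLinearMap.prod_apply]
    rw [real_inner_comm]
    ring
  -- projections
  have hvi : ∀ i : Fin 3, ContDiff ℝ 1 (fun x => v x i) := fun i =>
    (EuclideanSpace.proj (𝕜 := ℝ) i).contDiff.comp hv
  have hvid : ∀ (i : Fin 3) x, fderiv ℝ (fun y => v y i) x = (EuclideanSpace.proj (𝕜 := ℝ) i).comp (fderiv ℝ v x) := by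
    intro i x
    exact ((EuclideanSpace.proj (𝕜 := ℝ) i).hasFDerivAt.comp x (hvd x).hasFDerivAt).fderiv
  -- product functions
  set F : Fin 3 → EuclideanSpace ℝ (Fin 3) → ℝ := fun i x => g x * v x i with hFdef
  have hF : ∀ i, ContDiff ℝ 1 (F i) := fun i => hg.mul (hvi i)
  have hFc : ∀ i, HasCompactSupport (F i) := fun i => hgc.mul_right
  have h0 : ∀ i, ∫ x, fderiv ℝ (F i) x (EuclideanSpace.single i 1) ∂volume = 0 := fun i =>
    integral_fderiv_eq_zero_aux volume (F i) (hF i) (hFc i) _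
  -- pointwise identity
  have hpt : ∀ x, ∑ i : Fin 3, fderiv ℝ (F i) x (EuclideanSpace.single i 1)
      = 2 * (inner ℝ (fderiv ℝ u x (v x)) (u x) : ℝ) := by
    intro x
    have hFderiv : ∀ i : Fin 3, fderiv ℝ (F i) x (EuclideanSpace.single i 1)
        = (v x i) * fderiv ℝ g x (EuclideanSpace.single i 1) + g x * fderiv ℝ v x (EuclideanSpace.single i 1) i := by
      intro i
      have := fderiv_mul (𝕜 := ℝ) (x := x) ((hg.differentiable one_ne_zero) x)
        (((hvi i).differentiable one_ne_zero) x)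
      rw [hFdef]
      show fderiv ℝ (g * fun y => v y i) x (EuclideanSpace.single i 1) = _
      rw [this]
      simp [hvid i x]
      ring
    simp only [hFderiv]
    rw [Finset.sum_add_distrib, ← Finset.mul_sum, hdiv x, mul_zero, add_zero]
    have hdecomp : v x = ∑ i : Fin 3, (v x i) • EuclideanSpace.single i (1 : ℝ) := by
      have := (EuclideanSpace.basisFun (Fin 3) ℝ).sum_repr (v x)
      simpa [EuclideanSpace.basisFun_repr, EuclideanSpace.basisFun_apply] using this.symm
    have hlin : (fderiv ℝ g x) (v x)
        = ∑ i : Fin 3, v x i * (fderiv ℝ g x) (EuclideanSpace.single i 1) := by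
      conv_lhs => rw [hdecomp]
      rw [map_sum]
      simp [smul_eq_mul]
    rw [← hlin, hgd]
  -- integrability
  have hint : ∀ i : Fin 3, Integrable (fun x => fderiv ℝ (F i) x (EuclideanSpace.single i 1)) volume := by
    intro i
    apply Continuous.integrable_of_hasCompactSupport
    · exact ((hF i).continuous_fderiv_apply one_ne_zero).comp
        (continuous_id.prodMk continuous_const)
    · exact (hFc i).fderiv_apply ℝ (EuclideanSpace.single i 1)
  have : ∫ x, ∑ i : Fin 3, fderiv ℝ (F i) x (EuclideanSpace.single i 1) ∂volume = 0 := by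
    rw [integral_finset_sum _ (fun i _ => hint i)]
    simp [h0]
  rw [show (fun x => (inner ℝ (fderiv ℝ u x (v x)) (u x) : ℝ))
      = fun x => (2:ℝ)⁻¹ * ∑ i : Fin 3, fderiv ℝ (F i) x (EuclideanSpace.single i 1) from
    funext fun x => by rw [hpt x]; ring]
  rw [integral_const_mul, this, mul_zero]
end

section
/- Let q ≥ 2 be a real number and let u : ℝ³ → ℝ³ be continuously differentiable with compact support and div u(x) = 0 for all x ∈ ℝ³. Then ∫_{ℝ³} ‖u(x)‖^{q−2} · ⟨(u(x)·∇)u(x), u(x)⟩ dx = 0. -/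
open MeasureTheory

private lemma sum_coord_single (y : EuclideanSpace ℝ (Fin 3)) :
    ∑ i : Fin 3, y i • EuclideanSpace.single i (1:ℝ) = y := by
  simpa [EuclideanSpace.basisFun_apply, EuclideanSpace.basisFun_repr] using
    (EuclideanSpace.basisFun (Fin 3) ℝ).sum_repr y

private lemma integral_lineDeriv_eq_zero {w : EuclideanSpace ℝ (Fin 3) → ℝ} {C : NNReal}
    (hlip : LipschitzWith C w) (hc : HasCompactSupport w) (v : EuclideanSpace ℝ (Fin 3)) :
    ∫ x, lineDeriv ℝ w x v ∂(volume : Measure (EuclideanSpace ℝ (Fin 3))) = 0 := by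
  have h := LipschitzWith.integral_lineDeriv_mul_eq
    (μ := (volume : Measure (EuclideanSpace ℝ (Fin 3))))
    (LipschitzWith.const (1 : ℝ)) hlip hc (-v)
  have hconst : ∀ x : EuclideanSpace ℝ (Fin 3),
      lineDeriv ℝ (fun _ : EuclideanSpace ℝ (Fin 3) => (1:ℝ)) x (-v) = 0 := fun x =>
    ((hasFDerivAt_const (1:ℝ) x).hasLineDerivAt (-v)).lineDeriv.trans (by simp)
  simp only [hconst, zero_mul, integral_zero, neg_neg, mul_one] at h
  exact h.symm

/-- Let `q ≥ 2` be real and `u : ℝ³ → ℝ³` be `C¹` with compact support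
and `div u = 0`. Then `∫_{ℝ³} ‖u(x)‖^{q−2} ⟨(u·∇)u(x), u(x)⟩ dx = 0`, where the power is
the real power and `(u·∇)u` at `x` is the Fréchet derivative of `u` at `x` applied to
`u(x)`. -/
theorem stmt13 (q : ℝ) (hq : 2 ≤ q)
    (u : EuclideanSpace ℝ (Fin 3) → EuclideanSpace ℝ (Fin 3))
    (hu : ContDiff ℝ 1 u) (hcs : HasCompactSupport u)
    (hdiv : ∀ x, ∑ i : Fin 3, fderiv ℝ u x (EuclideanSpace.single i 1) i = 0) :
    ∫ x, ‖u x‖ ^ (q - 2) * (inner ℝ (fderiv ℝ u x (u x)) (u x) : ℝ) ∂volume = 0 := by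
  have hq1 : (1:ℝ) < q := by linarith
  have hq0 : q ≠ 0 := by linarith
  have hud : Differentiable ℝ u := hu.differentiable one_ne_zero
  -- the scalar function `w = ‖u‖^q`
  set w : EuclideanSpace ℝ (Fin 3) → ℝ := fun y => ‖u y‖ ^ q with hw_def
  have hwC : ContDiff ℝ 1 w := hu.norm_rpow hq1
  have hwd : ∀ x, HasFDerivAt w
      ((q * ‖u x‖ ^ (q - 2)) • ((innerSL ℝ (u x)).comp (fderiv ℝ u x))) x := by
    intro x
    have h := (hasFDerivAt_norm_rpow (u x) hq1).comp x (hud x).hasFDerivAt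
    simp only [ContinuousLinearMap.smul_comp] at h
    exact h
  -- coordinates of `u`
  have huiC : ∀ i : Fin 3, ContDiff ℝ 1 (fun y => u y i) := fun i =>
    (EuclideanSpace.proj i : EuclideanSpace ℝ (Fin 3) →L[ℝ] ℝ).contDiff.comp hu
  have huid : ∀ (i : Fin 3) x, HasFDerivAt (fun y => u y i)
      ((EuclideanSpace.proj i : EuclideanSpace ℝ (Fin 3) →L[ℝ] ℝ).comp (fderiv ℝ u x)) x :=
    fun i x =>
      (EuclideanSpace.proj i : EuclideanSpace ℝ (Fin 3) →L[ℝ] ℝ).hasFDerivAt.comp x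
        (hud x).hasFDerivAt
  -- the coordinate functions `v i = w * uᵢ` of `‖u‖^q • u`
  set v : Fin 3 → EuclideanSpace ℝ (Fin 3) → ℝ := fun i y => w y * u y i with hv_def
  have hvC : ∀ i, ContDiff ℝ 1 (v i) := fun i => hwC.mul (huiC i)
  have hvcs : ∀ i, HasCompactSupport (v i) := by
    intro i
    apply HasCompactSupport.intro hcs
    intro x hx
    have hux : u x = 0 := image_eq_zero_of_notMem_tsupport hx
    simp [hv_def, hw_def, hux]
  set Dv : Fin 3 → EuclideanSpace ℝ (Fin 3) →
      (EuclideanSpace ℝ (Fin 3) →L[ℝ] ℝ) := fun i x =>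
    w x • ((EuclideanSpace.proj i : EuclideanSpace ℝ (Fin 3) →L[ℝ] ℝ).comp (fderiv ℝ u x))
      + (u x i) • ((q * ‖u x‖ ^ (q - 2)) • ((innerSL ℝ (u x)).comp (fderiv ℝ u x)))
    with hDv_def
  have hvd : ∀ i x, HasFDerivAt (v i) (Dv i x) x := fun i x => (hwd x).mul (huid i x)
  -- each directional derivative integrates to zero
  have hint : ∀ i : Fin 3,
      ∫ x, (Dv i x) (EuclideanSpace.single i 1) ∂volume = 0 := by
    intro i
    obtain ⟨C, hC⟩ := ContDiff.lipschitzWith_of_hasCompactSupport (hvcs i) (hvC i) one_ne_zero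
    have h0 := integral_lineDeriv_eq_zero hC (hvcs i) (EuclideanSpace.single i 1)
    have he : ∀ x, lineDeriv ℝ (v i) x (EuclideanSpace.single i 1)
        = Dv i x (EuclideanSpace.single i 1) :=
      fun x => ((hvd i x).hasLineDerivAt _).lineDeriv
    simp_rw [he] at h0
    exact h0
  -- integrability of each directional derivative
  have hinteg : ∀ i : Fin 3,
      Integrable (fun x => (Dv i x) (EuclideanSpace.single i 1)) volume := by
    intro i
    have hfe : ∀ x, Dv i x = fderiv ℝ (v i) x := fun x => ((hvd i x).fderiv).symm
    have hcont : Continuous fun x => (fderiv ℝ (v i) x) (EuclideanSpace.single i (1:ℝ)) :=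
      ((hvC i).continuous_fderiv one_ne_zero).clm_apply continuous_const
    have hsupp : HasCompactSupport
        (fun x => (fderiv ℝ (v i) x) (EuclideanSpace.single i (1:ℝ))) :=
      ((hvcs i).fderiv ℝ).comp_left
        (g := fun L : EuclideanSpace ℝ (Fin 3) →L[ℝ] ℝ => L (EuclideanSpace.single i 1)) rfl
    have hi : Integrable (fun x => (fderiv ℝ (v i) x) (EuclideanSpace.single i (1:ℝ)))
        (volume : Measure (EuclideanSpace ℝ (Fin 3))) :=
      hcont.integrable_of_hasCompactSupport hsupp
    simpa [hfe] using hi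
  have hsum : ∫ x, ∑ i : Fin 3, (Dv i x) (EuclideanSpace.single i 1) ∂volume = 0 := by
    rw [integral_finset_sum _ (fun i _ => hinteg i)]
    simp [hint]
  -- pointwise identity: the divergence of `‖u‖^q • u`
  have hpt : ∀ x, ∑ i : Fin 3, (Dv i x) (EuclideanSpace.single i 1)
      = q * (‖u x‖ ^ (q - 2) * (inner ℝ (fderiv ℝ u x (u x)) (u x) : ℝ)) := by
    intro x
    have h1 : ∀ i : Fin 3, (Dv i x) (EuclideanSpace.single i 1)
        = w x * (fderiv ℝ u x (EuclideanSpace.single i 1) i)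
          + u x i * (q * ‖u x‖ ^ (q - 2)
              * (inner ℝ (u x) (fderiv ℝ u x (EuclideanSpace.single i 1)) : ℝ)) := by
      intro i
      simp [hDv_def, ContinuousLinearMap.smul_apply, ContinuousLinearMap.comp_apply,
        innerSL_apply_apply, smul_eq_mul]
    have h2 : (inner ℝ (fderiv ℝ u x (u x)) (u x) : ℝ)
        = ∑ i : Fin 3, u x i
            * (inner ℝ (u x) (fderiv ℝ u x (EuclideanSpace.single i 1)) : ℝ) := by
      rw [real_inner_comm]
      calc (inner ℝ (u x) (fderiv ℝ u x (u x)) : ℝ)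
          = (inner ℝ (u x) (fderiv ℝ u x
              (∑ i : Fin 3, u x i • EuclideanSpace.single i (1:ℝ))) : ℝ) := by
            rw [sum_coord_single]
        _ = ∑ i : Fin 3, u x i
              * (inner ℝ (u x) (fderiv ℝ u x (EuclideanSpace.single i 1)) : ℝ) := by
            rw [map_sum, inner_sum]
            exact Finset.sum_congr rfl fun i _ => by rw [(fderiv ℝ u x).map_smul, real_inner_smul_right]
    simp_rw [h1]
    rw [Finset.sum_add_distrib, ← Finset.mul_sum, hdiv x, mul_zero, zero_add, h2,
      Finset.mul_sum, Finset.mul_sum]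
    exact Finset.sum_congr rfl fun i _ => by ring
  have hfinal : q * ∫ x, ‖u x‖ ^ (q - 2)
      * (inner ℝ (fderiv ℝ u x (u x)) (u x) : ℝ) ∂volume = 0 := by
    rw [← integral_const_mul, ← hsum]
    congr 1
    funext x
    exact (hpt x).symm
  exact (mul_eq_zero.1 hfinal).resolve_left hq0
end
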